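/- arXiv:1707.01894 — 7 statements merged into one kernel-verified Lean document; each statement's English description precedes it below -/
import Mathlib

section
/- Merel's number ∏_{i=1}^{(N−1)/2} i^i, viewed in (ℤ/Nℤ)^×, is a p^s-th power in (ℤ/Nℤ)^× if and only if ζ lies in I_G², the square of the augmentation ideal of (ℤ/p^sℤ)[G]. -/
/-- The coefficient `β_i ∈ ℤ/p^sℤ`: the image of the rational number
`B₂(ĩ/N) = (ĩ/N)² − (ĩ/N) + 1/6`, where `ĩ ∈ {1, …, N−1}` is the integer
representative of `i ∈ (ℤ/Nℤ)ˣ`.  Since `6N²` is invertible mod `p^s`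
(as `p > 3` and `p ∣ N − 1`), this is expressed using inverses in `ℤ/p^sℤ`. -/
def bernoulliCoeff (p N s : ℕ) (i : (ZMod N)ˣ) : ZMod (p ^ s) :=
  (((i : ZMod N).val : ZMod (p ^ s)) ^ 2) * (((N : ZMod (p ^ s)) ^ 2)⁻¹)
    - ((i : ZMod N).val : ZMod (p ^ s)) * ((N : ZMod (p ^ s))⁻¹)
    + (6 : ZMod (p ^ s))⁻¹

/-- The zeta element `ζ = Σ_{i ∈ G} β_i · [i]` in the group ring
`(ℤ/p^sℤ)[G]`, where `G = (ℤ/Nℤ)ˣ`. -/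
noncomputable def zetaElement (p N s : ℕ) [Fact N.Prime] :
    MonoidAlgebra (ZMod (p ^ s)) (ZMod N)ˣ :=
  ∑ i : (ZMod N)ˣ, MonoidAlgebra.single i (bernoulliCoeff p N s i)

/-- The augmentation map `(ℤ/p^sℤ)[G] → ℤ/p^sℤ`, sending each group element to `1`. -/
noncomputable def augmentationMap (p N s : ℕ) :
    MonoidAlgebra (ZMod (p ^ s)) (ZMod N)ˣ →ₐ[ZMod (p ^ s)] ZMod (p ^ s) :=
  MonoidAlgebra.lift (ZMod (p ^ s)) (ZMod (p ^ s)) (ZMod N)ˣ 1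

/-- The augmentation ideal `I_G ⊆ (ℤ/p^sℤ)[G]`. -/
noncomputable def augmentationIdeal (p N s : ℕ) :
    Ideal (MonoidAlgebra (ZMod (p ^ s)) (ZMod N)ˣ) :=
  RingHom.ker (augmentationMap p N s)

lemma six_mul_sum_sq' (n : ℕ) :
    6 * ∑ i ∈ Finset.range (n + 1), i ^ 2 = n * (n + 1) * (2 * n + 1) := by
  induction n with
  | zero => simp
  | succ m ih => rw [Finset.sum_range_succ, Nat.mul_add, ih]; ring

open scoped Classical in
noncomputable def dlog {G : Type*} [Group G] (g₀ x : G) : ℕ :=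
  if h : ∃ n : ℕ, g₀ ^ n = x then h.choose else 0

lemma dlog_spec {G : Type*} [Group G] [Finite G] (g₀ : G)
    (hg : ∀ y, y ∈ Subgroup.zpowers g₀) (x : G) : g₀ ^ dlog g₀ x = x := by
  have hx : x ∈ Submonoid.powers g₀ := mem_powers_iff_mem_zpowers.mpr (hg x)
  have h : ∃ n : ℕ, g₀ ^ n = x := (Submonoid.mem_powers_iff x g₀).mp hx
  rw [dlog]
  classical
  rw [dif_pos h]
  exact h.choose_spec

section GroupRing
variable (p N s : ℕ) [Fact N.Prime]

lemma aug_single (g : (ZMod N)ˣ) (r : ZMod (p ^ s)) :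
    augmentationMap p N s (MonoidAlgebra.single g r) = r := by
  simp [augmentationMap, MonoidAlgebra.lift_single]

lemma single_sub_one_mem (g : (ZMod N)ˣ) :
    MonoidAlgebra.single g (1 : ZMod (p ^ s)) - 1 ∈ augmentationIdeal p N s := by
  simp [augmentationIdeal, RingHom.mem_ker, map_sub, aug_single]

lemma pow_aux (g : (ZMod N)ˣ) (n : ℕ) :
    MonoidAlgebra.single (g ^ n) (1 : ZMod (p ^ s)) - 1
      - n • (MonoidAlgebra.single g (1 : ZMod (p ^ s)) - 1)
      ∈ (augmentationIdeal p N s) ^ 2 := by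
  induction n with
  | zero => simpa [← MonoidAlgebra.one_def] using Ideal.zero_mem _
  | succ m ih =>
    have key : MonoidAlgebra.single (g ^ (m + 1)) (1 : ZMod (p ^ s)) - 1
        - (m + 1) • (MonoidAlgebra.single g (1 : ZMod (p ^ s)) - 1)
        = (MonoidAlgebra.single (g ^ m) (1 : ZMod (p ^ s)) - 1)
            * (MonoidAlgebra.single g (1 : ZMod (p ^ s)) - 1)
          + (MonoidAlgebra.single (g ^ m) (1 : ZMod (p ^ s)) - 1
              - m • (MonoidAlgebra.single g (1 : ZMod (p ^ s)) - 1)) := by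
      have hs : MonoidAlgebra.single (g ^ m * g) (1 : ZMod (p ^ s))
          = MonoidAlgebra.single (g ^ m) (1 : ZMod (p ^ s))
            * MonoidAlgebra.single g (1 : ZMod (p ^ s)) := by
        rw [MonoidAlgebra.single_mul_single, one_mul]
      rw [pow_succ, hs]
      push_cast [nsmul_eq_mul]
      ring
    rw [key]
    exact Ideal.add_mem _
      ((pow_two (augmentationIdeal p N s)) ▸
        Ideal.mul_mem_mul (single_sub_one_mem p N s _) (single_sub_one_mem p N s g)) ih

noncomputable def lhat (l : (ZMod N)ˣ → ZMod (p ^ s)) :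
    MonoidAlgebra (ZMod (p ^ s)) (ZMod N)ˣ →ₗ[ZMod (p ^ s)] ZMod (p ^ s) :=
  Finsupp.linearCombination _ l ∘ₗ (MonoidAlgebra.coeffLinearEquiv _).toLinearMap

lemma lhat_single (l : (ZMod N)ˣ → ZMod (p ^ s)) (g : (ZMod N)ˣ) (r : ZMod (p ^ s)) :
    lhat p N s l (MonoidAlgebra.single g r) = r * l g := by
  show Finsupp.linearCombination _ l (Finsupp.single g r) = r * l g
  rw [Finsupp.linearCombination_single, smul_eq_mul]

lemma lhat_mul (l : (ZMod N)ˣ → ZMod (p ^ s)) (hl : ∀ a b, l (a * b) = l a + l b)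
    (x y : MonoidAlgebra (ZMod (p ^ s)) (ZMod N)ˣ) :
    lhat p N s l (x * y) = augmentationMap p N s x * lhat p N s l y
      + augmentationMap p N s y * lhat p N s l x := by
  induction x using MonoidAlgebra.induction_linear with
  | zero => simp
  | add f g hf hg => rw [add_mul, map_add, map_add, hf, hg, map_add]; ring
  | single a b =>
    induction y using MonoidAlgebra.induction_linear with
    | zero => simp
    | add f g hf hg => rw [mul_add, map_add, map_add, hf, hg, map_add]; ring
    | single c d =>
      rw [MonoidAlgebra.single_mul_single, lhat_single, lhat_single, lhat_single,
        aug_single, aug_single, hl]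
      ring

lemma lhat_vanish (l : (ZMod N)ˣ → ZMod (p ^ s)) (hl : ∀ a b, l (a * b) = l a + l b)
    {z : MonoidAlgebra (ZMod (p ^ s)) (ZMod N)ˣ}
    (hz : z ∈ (augmentationIdeal p N s) ^ 2) : lhat p N s l z = 0 := by
  rw [pow_two] at hz
  refine Submodule.mul_induction_on hz ?_ ?_
  · intro m hm n hn
    rw [augmentationIdeal, RingHom.mem_ker] at hm hn
    rw [lhat_mul p N s l hl, hm, hn, zero_mul, zero_mul, add_zero]
  · intro a b ha hb
    rw [map_add, ha, hb, add_zero]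

lemma mem_sq_iff (g₀ : (ZMod N)ˣ) (hg : ∀ y, y ∈ Subgroup.zpowers g₀)
    (l : (ZMod N)ˣ → ZMod (p ^ s)) (hl : ∀ a b, l (a * b) = l a + l b)
    (hdl : ∀ g : (ZMod N)ˣ, l g = ((dlog g₀ g : ℕ) : ZMod (p ^ s)))
    (x : MonoidAlgebra (ZMod (p ^ s)) (ZMod N)ˣ) (hx : augmentationMap p N s x = 0) :
    x ∈ (augmentationIdeal p N s) ^ 2 ↔ lhat p N s l x = 0 := by
  constructor
  · exact fun hmem => lhat_vanish p N s l hl hmem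
  · intro hL
    have key : ∀ y : MonoidAlgebra (ZMod (p ^ s)) (ZMod N)ˣ,
        y - (augmentationMap p N s y) • 1
          - (lhat p N s l y) • (MonoidAlgebra.single g₀ 1 - 1)
          ∈ (augmentationIdeal p N s) ^ 2 := by
      intro y
      induction y using MonoidAlgebra.induction_linear with
      | zero => simpa using Ideal.zero_mem _
      | add f g hf hg' =>
        have := Ideal.add_mem _ hf hg'
        convert this using 1
        rw [map_add, map_add]
        module
      | single g r =>
        have h2 : augmentationMap p N s (MonoidAlgebra.single g r) = r := aug_single p N s g r
        have h3 : lhat p N s l (MonoidAlgebra.single g r) = r * l g := lhat_single p N s l g r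
        rw [h2, h3, hdl g]
        have base := pow_aux p N s g₀ (dlog g₀ g)
        rw [dlog_spec g₀ hg g] at base
        have hsm := Ideal.mul_mem_left ((augmentationIdeal p N s) ^ 2)
          (algebraMap (ZMod (p ^ s)) _ r) base
        rw [← Algebra.smul_def] at hsm
        convert hsm using 1
        rw [← Nat.cast_smul_eq_nsmul (ZMod (p ^ s)) (dlog g₀ g)
          (MonoidAlgebra.single g₀ 1 - 1 : MonoidAlgebra (ZMod (p ^ s)) (ZMod N)ˣ)]
        have h5 : MonoidAlgebra.single g r
            = r • (MonoidAlgebra.single g 1 : MonoidAlgebra (ZMod (p ^ s)) (ZMod N)ˣ) := by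
          rw [MonoidAlgebra.smul_single, smul_eq_mul, mul_one]
        rw [h5]
        module
    have hkey := key x
    rw [hx, hL, zero_smul, zero_smul, sub_zero, sub_zero] at hkey
    exact hkey

end GroupRing


/-- Merel's number `∏_{i=1}^{(N−1)/2} i^i`, viewed in `ℤ/Nℤ`, is a `p^s`-th power
in `(ℤ/Nℤ)ˣ` if and only if the zeta element `ζ` lies in `I_G²`, the square of
the augmentation ideal of `(ℤ/p^sℤ)[(ℤ/Nℤ)ˣ]`. -/
theorem merel_number_power_iff_zeta_in_aug_sq
    (p N s : ℕ) [Fact p.Prime] [Fact N.Prime]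
    (hp : 3 < p) (hs : 1 ≤ s) (hdvd : p ^ s ∣ N - 1) :
    (∃ u : (ZMod N)ˣ, (u : ZMod N) ^ (p ^ s)
        = ∏ i ∈ Finset.Icc 1 ((N - 1) / 2), (i : ZMod N) ^ i)
      ↔ zetaElement p N s ∈ (augmentationIdeal p N s) ^ 2 := by
  classical
  have hNp : N.Prime := Fact.out
  have hpp : p.Prime := Fact.out
  haveI : NeZero N := ⟨hNp.pos.ne'⟩
  have hp4 : p ≠ 4 := by intro h; rw [h] at hpp; norm_num at hpp
  have hp5 : 5 ≤ p := by omega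
  have hps5 : 5 ≤ p ^ s := le_trans hp5 (Nat.le_self_pow (by omega) p)
  have hN1pos : 0 < N - 1 := Nat.sub_pos_of_lt hNp.one_lt
  have hpsN : p ^ s ≤ N - 1 := Nat.le_of_dvd hN1pos hdvd
  have hN6 : 6 ≤ N := by omega
  have hNodd : N % 2 = 1 := by rcases hNp.eq_two_or_odd with h | h <;> omega
  set hh := (N - 1) / 2 with hhdef
  have hNhh : N - 1 = 2 * hh := by omega
  have hN2hh : N = 2 * hh + 1 := by omega
  -- facts in R := ZMod (p ^ s)
  have hcharN : ((N - 1 : ℕ) : ZMod (p ^ s)) = 0 :=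
    (ZMod.natCast_eq_zero_iff _ _).mpr hdvd
  have hN1 : (N : ZMod (p ^ s)) = 1 := by
    have hc : ((N - 1 : ℕ) : ZMod (p ^ s)) = (N : ZMod (p ^ s)) - 1 := by
      have : (1 : ℕ) ≤ N := by omega
      push_cast [Nat.cast_sub this]
      ring
    rw [hc, sub_eq_zero] at hcharN
    exact hcharN
  -- units in R
  have cop2 : Nat.Coprime 2 (p ^ s) :=
    Nat.Coprime.pow_right s ((Nat.coprime_primes Nat.prime_two hpp).mpr (by omega))
  have cop3 : Nat.Coprime 3 (p ^ s) :=
    Nat.Coprime.pow_right s ((Nat.coprime_primes Nat.prime_three hpp).mpr (by omega))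
  have hu2 : IsUnit (2 : ZMod (p ^ s)) := by
    have := (ZMod.isUnit_iff_coprime 2 (p ^ s)).mpr cop2
    simpa using this
  have hu3 : IsUnit (3 : ZMod (p ^ s)) := by
    have := (ZMod.isUnit_iff_coprime 3 (p ^ s)).mpr cop3
    simpa using this
  have hcan2 : ∀ a : ZMod (p ^ s), (2 : ZMod (p ^ s)) * a = 0 → a = 0 := by
    intro a ha
    exact hu2.mul_left_cancel (by rw [ha, mul_zero])
  have hcan3 : ∀ a : ZMod (p ^ s), (3 : ZMod (p ^ s)) * a = 0 → a = 0 := by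
    intro a ha
    exact hu3.mul_left_cancel (by rw [ha, mul_zero])
  -- the discrete logarithm
  obtain ⟨g₀, hg₀⟩ := IsCyclic.exists_generator (α := (ZMod N)ˣ)
  have hord : orderOf g₀ = N - 1 := by
    rw [orderOf_eq_card_of_forall_mem_zpowers hg₀, Nat.card_eq_fintype_card, ZMod.card_units]
  set l : (ZMod N)ˣ → ZMod (p ^ s) := fun g => ((dlog g₀ g : ℕ) : ZMod (p ^ s)) with hldef
  have hl : ∀ a b, l (a * b) = l a + l b := by
    intro a b
    have hmod : dlog g₀ (a * b) ≡ dlog g₀ a + dlog g₀ b [MOD N - 1] := by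
      have hpw : g₀ ^ dlog g₀ (a * b) = g₀ ^ (dlog g₀ a + dlog g₀ b) := by
        rw [pow_add, dlog_spec g₀ hg₀, dlog_spec g₀ hg₀, dlog_spec g₀ hg₀]
      rw [← hord]
      exact pow_eq_pow_iff_modEq.mp hpw
    have hmod2 : dlog g₀ (a * b) ≡ dlog g₀ a + dlog g₀ b [MOD p ^ s] :=
      Nat.ModEq.of_dvd hdvd hmod
    have := (ZMod.natCast_eq_natCast_iff _ _ _).mpr hmod2
    simpa [hldef, Nat.cast_add] using this
  have hl1 : l 1 = 0 := by
    have h := hl 1 1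
    rw [mul_one] at h
    exact (left_eq_add.mp h)
  have hlpow : ∀ (g : (ZMod N)ˣ) (n : ℕ), l (g ^ n) = (n : ZMod (p ^ s)) * l g := by
    intro g n
    induction n with
    | zero => simpa using hl1
    | succ m ih => rw [pow_succ, hl, ih]; push_cast; ring
  have hlneg1 : l (-1) = 0 := by
    have h := hl (-1) (-1)
    rw [neg_mul_neg, one_mul, hl1] at h
    exact hcan2 _ (by rw [two_mul]; exact h.symm)
  have hlneg : ∀ g : (ZMod N)ˣ, l (-g) = l g := by
    intro g
    rw [← neg_one_mul, hl, hlneg1, zero_add]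
  have hlprod : ∀ (t : Finset (ZMod N)ˣ) (f : (ZMod N)ˣ → (ZMod N)ˣ),
      l (∏ i ∈ t, f i) = ∑ i ∈ t, l (f i) := by
    intro t f
    induction t using Finset.cons_induction with
    | empty => simpa using hl1
    | cons a t ha ih => rw [Finset.prod_cons, Finset.sum_cons, hl, ih]
  have hsolv : ∀ x : (ZMod N)ˣ, (∃ u, u ^ p ^ s = x) ↔ l x = 0 := by
    intro x
    constructor
    · rintro ⟨u, rfl⟩
      rw [hlpow, ZMod.natCast_self, zero_mul]
    · intro hx
      have : p ^ s ∣ dlog g₀ x := (ZMod.natCast_eq_zero_iff _ _).mp hx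
      obtain ⟨c, hc⟩ := this
      exact ⟨g₀ ^ c, by rw [← pow_mul, mul_comm, ← hc, dlog_spec g₀ hg₀]⟩
  -- values of units
  have hvb : ∀ i : (ZMod N)ˣ, 1 ≤ ((i : ZMod N).val) ∧ ((i : ZMod N).val) ≤ N - 1 := by
    intro i
    have h0 : (i : ZMod N) ≠ 0 := i.ne_zero
    have hlt := ZMod.val_lt (i : ZMod N)
    have hv0 : (i : ZMod N).val ≠ 0 := by
      rw [Ne, ZMod.val_eq_zero]; exact h0
    omega
  set uof : ℕ → (ZMod N)ˣ :=
    fun k => if hk : ((k : ZMod N)) = 0 then 1 else Units.mk0 _ hk with huofdef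
  have hkne : ∀ k : ℕ, 1 ≤ k → k ≤ N - 1 → ((k : ZMod N)) ≠ 0 := by
    intro k h1 h2 hk
    have := (ZMod.natCast_eq_zero_iff _ _).mp hk
    have := Nat.le_of_dvd (by omega) this
    omega
  have huof_coe : ∀ k : ℕ, 1 ≤ k → k ≤ N - 1 → ((uof k : ZMod N)) = (k : ZMod N) := by
    intro k h1 h2
    rw [huofdef]
    simp only [dif_neg (hkne k h1 h2)]
    rfl
  have huof_val : ∀ k : ℕ, 1 ≤ k → k ≤ N - 1 → ((uof k : ZMod N)).val = k := by
    intro k h1 h2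
    rw [huof_coe k h1 h2, ZMod.val_natCast_of_lt (by omega)]
  have huof_inv : ∀ i : (ZMod N)ˣ, uof ((i : ZMod N).val) = i := by
    intro i
    apply Units.ext
    rw [huof_coe _ (hvb i).1 (hvb i).2, ZMod.natCast_zmod_val]
  -- reindexing lemmas
  have S1 : ∀ F : ℕ → ZMod (p ^ s),
      ∑ i : (ZMod N)ˣ, F ((i : ZMod N).val) = ∑ k ∈ Finset.Icc 1 (N - 1), F k := by
    intro F
    refine Finset.sum_nbij' (fun i => (i : ZMod N).val) uof ?_ ?_ ?_ ?_ ?_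
    · intro a _
      simp only [Finset.mem_Icc]
      exact ⟨(hvb a).1, (hvb a).2⟩
    · intro k _
      exact Finset.mem_univ _
    · intro a _
      exact huof_inv a
    · intro k hk
      simp only [Finset.mem_Icc] at hk
      exact huof_val k hk.1 hk.2
    · intro a _
      rfl
  set Slow : Finset (ZMod N)ˣ :=
    Finset.univ.filter (fun i : (ZMod N)ˣ => ((i : ZMod N).val) ≤ hh) with hSlowdef
  have P1 : ∀ F : ℕ → ZMod N,
      ∏ i ∈ Slow, F ((i : ZMod N).val) = ∏ k ∈ Finset.Icc 1 hh, F k := by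
    intro F
    refine Finset.prod_nbij' (fun i => (i : ZMod N).val) uof ?_ ?_ ?_ ?_ ?_
    · intro a ha
      rw [hSlowdef, Finset.mem_filter] at ha
      simp only [Finset.mem_Icc]
      exact ⟨(hvb a).1, ha.2⟩
    · intro k hk
      simp only [Finset.mem_Icc] at hk
      rw [hSlowdef, Finset.mem_filter]
      refine ⟨Finset.mem_univ _, ?_⟩
      rw [huof_val k hk.1 (by omega)]
      exact hk.2
    · intro a _
      exact huof_inv a
    · intro k hk
      simp only [Finset.mem_Icc] at hk
      exact huof_val k hk.1 (by omega)
    · intro a _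
      rfl
  have hvneg : ∀ i : (ZMod N)ˣ, ((-i : (ZMod N)ˣ) : ZMod N).val = N - (i : ZMod N).val := by
    intro i
    rw [Units.val_neg, ZMod.neg_val, if_neg i.ne_zero]
  have S3 : ∀ f : (ZMod N)ˣ → ZMod (p ^ s),
      ∑ i ∈ Finset.univ.filter (fun i : (ZMod N)ˣ => ¬ ((i : ZMod N).val) ≤ hh), f i
        = ∑ i ∈ Slow, f (-i) := by
    intro f
    refine Finset.sum_nbij' (fun i => -i) (fun i => -i) ?_ ?_ ?_ ?_ ?_
    · intro a ha
      simp only [Finset.mem_filter, Finset.mem_univ, true_and] at ha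
      rw [hSlowdef, Finset.mem_filter]
      refine ⟨Finset.mem_univ _, ?_⟩
      rw [hvneg a]
      have := (hvb a).2
      omega
    · intro a ha
      rw [hSlowdef, Finset.mem_filter] at ha
      simp only [Finset.mem_filter, Finset.mem_univ, true_and]
      rw [hvneg a]
      have := (hvb a).1
      omega
    · intro a _; exact neg_neg a
    · intro a _; exact neg_neg a
    · intro a _; rw [neg_neg]
  set u₂ : (ZMod N)ˣ := uof 2 with hu2def
  have hu2coe : ((u₂ : ZMod N)) = (2 : ZMod N) := by
    have := huof_coe 2 (by omega) (by omega)
    rw [hu2def, this]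
    norm_cast
  have S4 : ∀ f : (ZMod N)ˣ → ZMod (p ^ s),
      ∑ i : (ZMod N)ˣ, f (u₂ * i) = ∑ i : (ZMod N)ˣ, f i :=
    fun f => Fintype.sum_equiv (Equiv.mulLeft u₂) _ _ (fun i => rfl)
  have hval2 : ∀ i : (ZMod N)ˣ, (((u₂ * i : (ZMod N)ˣ) : ZMod N)).val
      = if ((i : ZMod N).val) ≤ hh then 2 * (i : ZMod N).val else 2 * (i : ZMod N).val - N := by
    intro i
    have hcoe : ((u₂ * i : (ZMod N)ˣ) : ZMod N) = ((2 * (i : ZMod N).val : ℕ) : ZMod N) := by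
      push_cast
      rw [hu2coe, ZMod.natCast_zmod_val]
    rw [hcoe, ZMod.val_natCast]
    have h1 := (hvb i).1
    have h2 := (hvb i).2
    split
    · next hle => exact Nat.mod_eq_of_lt (by omega)
    · next hgt =>
      rw [Nat.mod_eq_sub_mod (by omega)]
      exact Nat.mod_eq_of_lt (by omega)
  -- power sums vanish mod p^s
  have hins : Finset.range N = insert 0 (Finset.Icc 1 (N - 1)) := by
    ext x
    simp only [Finset.mem_range, Finset.mem_insert, Finset.mem_Icc]
    omega
  have hdvd1 : p ^ s ∣ ∑ k ∈ Finset.Icc 1 (N - 1), k := by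
    have hg : (∑ k ∈ Finset.range N, k) * 2 = N * (N - 1) := Finset.sum_range_id_mul_two N
    have hr : ∑ k ∈ Finset.range N, k = ∑ k ∈ Finset.Icc 1 (N - 1), k := by
      rw [hins, Finset.sum_insert (by simp)]
      simp
    rw [hr] at hg
    refine cop2.symm.dvd_of_dvd_mul_right ?_
    rw [hg]
    exact Dvd.dvd.mul_left hdvd N
  have hdvd2 : p ^ s ∣ ∑ k ∈ Finset.Icc 1 (N - 1), k ^ 2 := by
    have hg := six_mul_sum_sq' (N - 1)
    rw [show (N - 1) + 1 = N from by omega] at hg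
    have hr : ∑ k ∈ Finset.range N, k ^ 2 = ∑ k ∈ Finset.Icc 1 (N - 1), k ^ 2 := by
      rw [hins, Finset.sum_insert (by simp)]
      simp
    rw [hr] at hg
    have hd6 : p ^ s ∣ 6 * ∑ k ∈ Finset.Icc 1 (N - 1), k ^ 2 := by
      rw [hg]
      exact (hdvd.mul_right N).mul_right _
    have cop6 : Nat.Coprime (p ^ s) 6 := by
      have : (6 : ℕ) = 2 * 3 := by norm_num
      rw [this]
      exact Nat.Coprime.mul_right cop2.symm cop3.symm
    exact cop6.dvd_of_dvd_mul_left hd6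
  have hsum1 : ∑ k ∈ Finset.Icc 1 (N - 1), (k : ZMod (p ^ s)) = 0 := by
    rw [← Nat.cast_sum]
    exact (ZMod.natCast_eq_zero_iff _ _).mpr hdvd1
  have hsum2 : ∑ k ∈ Finset.Icc 1 (N - 1), (k : ZMod (p ^ s)) ^ 2 = 0 := by
    have : ∑ k ∈ Finset.Icc 1 (N - 1), (k : ZMod (p ^ s)) ^ 2
        = ((∑ k ∈ Finset.Icc 1 (N - 1), k ^ 2 : ℕ) : ZMod (p ^ s)) := by
      push_cast
      rfl
    rw [this]
    exact (ZMod.natCast_eq_zero_iff _ _).mpr hdvd2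
  -- abbreviation for the value cast in R
  set lv : (ZMod N)ˣ → ZMod (p ^ s) :=
    fun i => (((i : ZMod N).val : ℕ) : ZMod (p ^ s)) with hlvdef
  have C1 : ∑ i : (ZMod N)ˣ, ((lv i) ^ 2 - lv i) = 0 := by
    have := S1 (fun k => ((k : ZMod (p ^ s)) ^ 2 - (k : ZMod (p ^ s))))
    rw [hlvdef]
    simp only at this ⊢
    rw [this, Finset.sum_sub_distrib, hsum1, hsum2, sub_zero]
  have hlsum : ∑ i : (ZMod N)ˣ, l i = 0 := by
    have hprod : (∏ i : (ZMod N)ˣ, i) = (-1 : (ZMod N)ˣ) :=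
      FiniteField.prod_univ_units_id_eq_neg_one
    have := hlprod Finset.univ id
    simp only [id] at this
    rw [← this, hprod, hlneg1]
  -- the three key quantities
  set U : ZMod (p ^ s) := ∑ i ∈ Slow, lv i * l i with hUdef
  set A : ZMod (p ^ s) := ∑ i ∈ Slow, (lv i) ^ 2 * l i with hAdef
  set D : ZMod (p ^ s) := ∑ i : (ZMod N)ˣ, ((lv i) ^ 2 - lv i) * l i with hDdef
  have hlvneg : ∀ i : (ZMod N)ˣ, lv (-i) = 1 - lv i := by
    intro i
    simp only [hlvdef]
    rw [hvneg i, Nat.cast_sub (by have := (hvb i).2; omega), hN1]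
  have hlv2low : ∀ i : (ZMod N)ˣ, (i : ZMod N).val ≤ hh → lv (u₂ * i) = 2 * lv i := by
    intro i hi
    simp only [hlvdef]
    rw [hval2 i, if_pos hi]
    push_cast
    ring
  have hsplit : ∀ f : (ZMod N)ˣ → ZMod (p ^ s),
      ∑ i : (ZMod N)ˣ, f i = ∑ i ∈ Slow, f i + ∑ i ∈ Slow, f (-i) := by
    intro f
    have h1 := Finset.sum_filter_add_sum_filter_not Finset.univ
      (fun i : (ZMod N)ˣ => (i : ZMod N).val ≤ hh) f
    rw [← h1, S3 f]
  have hD1 : D = 2 * (A - U) := by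
    have hcongr : ∀ i ∈ Slow, ((lv (-i)) ^ 2 - lv (-i)) * l (-i)
        = ((lv i) ^ 2 - lv i) * l i := by
      intro i _
      rw [hlvneg i, hlneg i]
      ring
    have hsum : ∑ i ∈ Slow, ((lv i) ^ 2 - lv i) * l i = A - U := by
      rw [hAdef, hUdef, ← Finset.sum_sub_distrib]
      exact Finset.sum_congr rfl (fun i _ => by ring)
    rw [hDdef, hsplit (fun i => ((lv i) ^ 2 - lv i) * l i)]
    rw [Finset.sum_congr rfl hcongr, hsum]
    ring
  have hC1' : ∑ i : (ZMod N)ˣ, ((lv (u₂ * i)) ^ 2 - lv (u₂ * i)) = 0 := by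
    have := S4 (fun j => (lv j) ^ 2 - lv j)
    rw [this]
    exact C1
  have hD2 : D = ∑ i : (ZMod N)ˣ, ((lv (u₂ * i)) ^ 2 - lv (u₂ * i)) * l i := by
    have h0 := S4 (fun j => ((lv j) ^ 2 - lv j) * l j)
    rw [hDdef, ← h0]
    have hpt : ∀ i : (ZMod N)ˣ, ((lv (u₂ * i)) ^ 2 - lv (u₂ * i)) * l (u₂ * i)
        = ((lv (u₂ * i)) ^ 2 - lv (u₂ * i)) * l i
          + ((lv (u₂ * i)) ^ 2 - lv (u₂ * i)) * l u₂ := by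
      intro i
      rw [hl u₂ i]
      ring
    rw [Finset.sum_congr rfl (fun i _ => hpt i), Finset.sum_add_distrib,
      ← Finset.sum_mul, hC1', zero_mul, add_zero]
  have hD3 : D = 2 * (4 * A - 2 * U) := by
    rw [hD2, hsplit (fun i => ((lv (u₂ * i)) ^ 2 - lv (u₂ * i)) * l i)]
    have hlow : ∀ i ∈ Slow, ((lv (u₂ * i)) ^ 2 - lv (u₂ * i)) * l i
        = (4 * (lv i) ^ 2 - 2 * lv i) * l i := by
      intro i hi
      rw [hSlowdef, Finset.mem_filter] at hi
      rw [hlv2low i hi.2]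
      ring
    have hhigh : ∀ i ∈ Slow, ((lv (u₂ * -i)) ^ 2 - lv (u₂ * -i)) * l (-i)
        = (4 * (lv i) ^ 2 - 2 * lv i) * l i := by
      intro i hi
      rw [hSlowdef, Finset.mem_filter] at hi
      rw [mul_neg, hlvneg (u₂ * i), hlv2low i hi.2, hlneg i]
      ring
    have hsum : ∑ i ∈ Slow, (4 * (lv i) ^ 2 - 2 * lv i) * l i = 4 * A - 2 * U := by
      rw [hAdef, hUdef, Finset.mul_sum, Finset.mul_sum, ← Finset.sum_sub_distrib]
      exact Finset.sum_congr rfl (fun i _ => by ring)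
    rw [Finset.sum_congr rfl hlow, Finset.sum_congr rfl hhigh, hsum]
    ring
  have h3A : 3 * A = U := by
    have hz : (2 : ZMod (p ^ s)) * (3 * A - U) = 0 := by
      linear_combination hD1 - hD3
    have := hcan2 _ hz
    exact sub_eq_zero.mp this
  have h3D : 3 * D = -(4 * U) := by
    rw [hD1]
    linear_combination 2 * h3A
  have hDU : D = 0 ↔ U = 0 := by
    constructor
    · intro hD
      have h4 : (4 : ZMod (p ^ s)) * U = 0 := by
        have h := h3D
        rw [hD, mul_zero] at h
        linear_combination h
      have h2 : (2 : ZMod (p ^ s)) * U = 0 := hcan2 _ (by linear_combination h4)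
      exact hcan2 _ h2
    · intro hU
      have h : (3 : ZMod (p ^ s)) * D = 0 := by rw [h3D, hU, mul_zero, neg_zero]
      exact hcan3 _ h
  -- the zeta element
  have hbeta : ∀ i : (ZMod N)ˣ,
      bernoulliCoeff p N s i = (lv i) ^ 2 - lv i + (6 : ZMod (p ^ s))⁻¹ := by
    intro i
    rw [bernoulliCoeff, hN1]
    simp only [hlvdef, one_pow, ZMod.inv_one, mul_one]
  have haug : augmentationMap p N s (zetaElement p N s) = 0 := by
    rw [zetaElement, map_sum]
    have hpt : ∀ i : (ZMod N)ˣ,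
        augmentationMap p N s (MonoidAlgebra.single i (bernoulliCoeff p N s i))
          = ((lv i) ^ 2 - lv i) + (6 : ZMod (p ^ s))⁻¹ := by
      intro i
      rw [aug_single, hbeta]
    rw [Finset.sum_congr rfl (fun i _ => hpt i), Finset.sum_add_distrib, C1, zero_add,
      Finset.sum_const, Finset.card_univ, ZMod.card_units, nsmul_eq_mul, hcharN, zero_mul]
  have hlhat : lhat p N s l (zetaElement p N s) = D := by
    rw [zetaElement, map_sum]
    have hpt : ∀ i : (ZMod N)ˣ,
        lhat p N s l (MonoidAlgebra.single i (bernoulliCoeff p N s i))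
          = ((lv i) ^ 2 - lv i) * l i + (6 : ZMod (p ^ s))⁻¹ * l i := by
      intro i
      rw [lhat_single, hbeta]
      ring
    rw [Finset.sum_congr rfl (fun i _ => hpt i), Finset.sum_add_distrib, ← Finset.mul_sum,
      hlsum, mul_zero, add_zero, hDdef]
  -- the Merel unit
  set Mu : (ZMod N)ˣ := ∏ i ∈ Slow, i ^ ((i : ZMod N).val) with hMudef
  have hMcoe : (Mu : ZMod N) = ∏ k ∈ Finset.Icc 1 hh, (k : ZMod N) ^ k := by
    have hmp := map_prod (Units.coeHom (ZMod N))
      (fun i : (ZMod N)ˣ => i ^ ((i : ZMod N).val)) Slow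
    simp only [Units.coeHom_apply, Units.val_pow_eq_pow_val] at hmp
    have hpt : ∀ i ∈ Slow, ((i : ZMod N)) ^ ((i : ZMod N).val)
        = ((((i : ZMod N).val : ℕ) : ZMod N)) ^ ((i : ZMod N).val) := by
      intro i _
      rw [ZMod.natCast_zmod_val]
    rw [hMudef, hmp, Finset.prod_congr rfl hpt]
    exact P1 (fun k => ((k : ℕ) : ZMod N) ^ k)
  have hlMu : l Mu = U := by
    rw [hMudef, hlprod, hUdef]
    apply Finset.sum_congr rfl
    intro i _
    rw [hlpow]
  have hLHS : (∃ u : (ZMod N)ˣ, (u : ZMod N) ^ (p ^ s)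
      = ∏ i ∈ Finset.Icc 1 hh, (i : ZMod N) ^ i) ↔ U = 0 := by
    rw [← hlMu, ← hsolv Mu]
    constructor
    · rintro ⟨u, hu⟩
      refine ⟨u, Units.ext ?_⟩
      rw [← hMcoe] at hu
      rw [Units.val_pow_eq_pow_val]
      exact hu
    · rintro ⟨u, hu⟩
      refine ⟨u, ?_⟩
      rw [← hMcoe, ← hu, Units.val_pow_eq_pow_val]
  rw [hLHS, mem_sq_iff p N s g₀ hg₀ l hl (fun g => rfl) _ haug, hlhat, hDU]
end

section
/- The identity Σ_{i=1}^{N−1} i²·log(i) = −(4/3)·Σ_{i=1}^{(N−1)/2} i·log(i) holds in ℤ/p^sℤ, where 1/3 denotes the multiplicative inverse of 3 modulo p^s (which exists since p > 3). -/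
open Finset

private lemma aux_gauss (n : ℕ) : ∑ j ∈ Finset.Icc 1 n, 2 * j = n * (n + 1) := by
  induction n with
  | zero => simp
  | succ k ih =>
    rw [Finset.sum_Icc_succ_top (Nat.succ_le_succ (Nat.zero_le k)), ih]; ring

private lemma aux_sq (n : ℕ) :
    ∑ j ∈ Finset.Icc 1 n, 6 * j ^ 2 = n * (n + 1) * (2 * n + 1) := by
  induction n with
  | zero => simp
  | succ k ih =>
    rw [Finset.sum_Icc_succ_top (Nat.succ_le_succ (Nat.zero_le k)), ih]; ring

private lemma aux_fact (n : ℕ) : ∏ i ∈ Finset.Icc 1 n, i = Nat.factorial n := by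
  induction n with
  | zero => simp
  | succ k ih =>
    rw [Finset.prod_Icc_succ_top (Nat.succ_le_succ (Nat.zero_le k)), ih,
      Nat.factorial_succ, mul_comm]

/-- The identity `Σ_{i=1}^{N−1} i²·log(i) = −(4/3)·Σ_{i=1}^{(N−1)/2} i·log(i)`
holds in `ℤ/p^sℤ`, where `1/3` denotes the multiplicative inverse of `3` modulo
`p^s`, and `log` is a surjective group homomorphism `(ℤ/Nℤ)ˣ → ℤ/p^sℤ`
(formalized as a function on `ℤ/Nℤ` that is a homomorphism on units and
surjective onto `ℤ/p^sℤ`). -/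
theorem sum_sq_log_eq_neg_four_thirds_sum_log
    (p N s : ℕ) [Fact p.Prime] [Fact N.Prime]
    (hp : 3 < p) (hs : 1 ≤ s) (hdvd : p ^ s ∣ N - 1)
    (log : ZMod N → ZMod (p ^ s))
    (hlog : ∀ a b : (ZMod N)ˣ, log ((a : ZMod N) * (b : ZMod N)) = log a + log b)
    (hsurj : ∀ c : ZMod (p ^ s), ∃ u : (ZMod N)ˣ, log (u : ZMod N) = c) :
    ∑ i ∈ Finset.Icc 1 (N - 1), ((i : ZMod (p ^ s)) ^ 2) * log (i : ZMod N)
      = -(4 * (3 : ZMod (p ^ s))⁻¹)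
          * ∑ i ∈ Finset.Icc 1 ((N - 1) / 2), (i : ZMod (p ^ s)) * log (i : ZMod N) := by
  have hpp : p.Prime := Fact.out
  have hNp : N.Prime := Fact.out
  haveI : NeZero (p ^ s) := ⟨pow_ne_zero s hpp.ne_zero⟩
  -- size facts
  have hN2 : 2 ≤ N := hNp.two_le
  have hps_le : p ^ s ≤ N - 1 := Nat.le_of_dvd (by omega) hdvd
  have hp_le : p ≤ p ^ s := Nat.le_self_pow (by omega) p
  have hN5 : 5 ≤ N := by omega
  have hNodd : N % 2 = 1 := Nat.odd_iff.mp (hNp.odd_of_ne_two (by omega))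
  set m := (N - 1) / 2 with hm
  have hm2 : N - 1 = 2 * m := by omega
  -- divisibility facts
  have hc2 : Nat.Coprime 2 (p ^ s) :=
    Nat.Coprime.pow_right s ((Nat.coprime_primes Nat.prime_two hpp).mpr (by omega))
  have hc3 : Nat.Coprime 3 (p ^ s) :=
    Nat.Coprime.pow_right s ((Nat.coprime_primes Nat.prime_three hpp).mpr (by omega))
  have hmdvd : p ^ s ∣ m := by
    have h1 : p ^ s ∣ 2 * m := hm2 ▸ hdvd
    exact (Nat.Coprime.dvd_of_dvd_mul_left hc2.symm h1)
  have hmR : ((m : ℕ) : ZMod (p ^ s)) = 0 :=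
    (ZMod.natCast_eq_zero_iff _ _).mpr hmdvd
  have hNR : ((N : ℕ) : ZMod (p ^ s)) = 1 := by
    have hN' : N = (N - 1) + 1 := by omega
    have h0 : ((N - 1 : ℕ) : ZMod (p ^ s)) = 0 :=
      (ZMod.natCast_eq_zero_iff _ _).mpr hdvd
    rw [hN', Nat.cast_add, Nat.cast_one, h0, zero_add]
  -- units in ZMod (p^s)
  have hu2 : IsUnit (2 : ZMod (p ^ s)) := by
    have := (ZMod.isUnit_iff_coprime 2 (p ^ s)).mpr hc2
    simpa using this
  have hu3 : IsUnit (3 : ZMod (p ^ s)) := by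
    have := (ZMod.isUnit_iff_coprime 3 (p ^ s)).mpr hc3
    simpa using this
  have h31 : (3 : ZMod (p ^ s))⁻¹ * 3 = 1 := ZMod.inv_mul_of_unit 3 hu3
  -- units in ZMod N
  have hunit : ∀ i : ℕ, 1 ≤ i → i ≤ N - 1 → IsUnit ((i : ZMod N)) := by
    intro i h1 h2
    rw [isUnit_iff_ne_zero, Ne, ZMod.natCast_eq_zero_iff]
    intro hd
    have := Nat.le_of_dvd (by omega) hd
    omega
  have hu2N : IsUnit (2 : ZMod N) := by
    have := hunit 2 (by omega) (by omega)
    simpa using this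
  -- log basics
  have hlog' : ∀ x y : ZMod N, IsUnit x → IsUnit y → log (x * y) = log x + log y := by
    rintro x y ⟨a, rfl⟩ ⟨b, rfl⟩; exact hlog a b
  have hlog1 : log (1 : ZMod N) = 0 := by
    have h := hlog 1 1
    simp only [Units.val_one, mul_one] at h
    have h2 : log (1 : ZMod N) + 0 = log 1 + log 1 := by simpa using h
    exact (add_left_cancel h2).symm
  have htors : ∀ x : ZMod (p ^ s), x + x = 0 → x = 0 := by
    intro x hx
    have h2x : (2 : ZMod (p ^ s)) * x = 0 := by rw [two_mul]; exact hx
    exact (hu2.mul_right_eq_zero).mp h2x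
  have hlogm1 : log (-1 : ZMod N) = 0 := by
    have h := hlog (-1) (-1)
    simp only [Units.val_neg, Units.val_one, neg_mul_neg, one_mul] at h
    rw [hlog1] at h
    exact htors _ h.symm
  have hlog_neg : ∀ x : ZMod N, IsUnit x → log (-x) = log x := by
    intro x hx
    have h := hlog' (-1) x (IsUnit.neg isUnit_one) hx
    rw [neg_one_mul] at h
    rw [h, hlogm1, zero_add]
  -- sum of logs equals log of product
  have sum_log : ∀ t : Finset ℕ, (∀ i ∈ t, IsUnit ((i : ZMod N))) →
      IsUnit (∏ i ∈ t, (i : ZMod N)) ∧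
        log (∏ i ∈ t, (i : ZMod N)) = ∑ i ∈ t, log (i : ZMod N) := by
    intro t
    induction t using Finset.cons_induction with
    | empty => intro _; exact ⟨by simpa using isUnit_one, by simpa using hlog1⟩
    | cons a t ha ih =>
      intro h
      have h1 := h a (Finset.mem_cons_self a t)
      have h2 := ih fun i hi => h i (Finset.mem_cons_of_mem hi)
      rw [Finset.prod_cons, Finset.sum_cons]
      exact ⟨h1.mul h2.1, by rw [hlog' _ _ h1 h2.1, h2.2]⟩
  -- Wilson: full sum of logs vanishes
  have hW : ∑ i ∈ Finset.Icc 1 (N - 1), log (i : ZMod N) = 0 := by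
    have hu : ∀ i ∈ Finset.Icc 1 (N - 1), IsUnit ((i : ZMod N)) := by
      intro i hi; rw [Finset.mem_Icc] at hi; exact hunit i hi.1 hi.2
    rw [← (sum_log _ hu).2]
    have hprod : (∏ i ∈ Finset.Icc 1 (N - 1), (i : ZMod N))
        = ((Nat.factorial (N - 1) : ℕ) : ZMod N) := by
      rw [← Nat.cast_prod, aux_fact]
    rw [hprod, ZMod.wilsons_lemma, hlogm1]
  -- reflection split
  have hsplit : ∀ F : ℕ → ZMod (p ^ s),
      ∑ i ∈ Finset.Icc 1 (N - 1), F i = ∑ j ∈ Finset.Icc 1 m, (F j + F (N - j)) := by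
    intro F
    have hun : Finset.Icc 1 (N - 1) = Finset.Icc 1 m ∪ Finset.Icc (m + 1) (N - 1) := by
      ext x; simp only [Finset.mem_Icc, Finset.mem_union]; omega
    have hdisj : Disjoint (Finset.Icc 1 m) (Finset.Icc (m + 1) (N - 1)) := by
      rw [Finset.disjoint_left]
      intro x hx hx'
      simp only [Finset.mem_Icc] at hx hx'
      omega
    have himg : Finset.Icc (m + 1) (N - 1) = (Finset.Icc 1 m).image (fun j => N - j) := by
      ext x
      simp only [Finset.mem_Icc, Finset.mem_image]
      constructor
      · intro hx; exact ⟨N - x, by omega, by omega⟩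
      · rintro ⟨j, hj, rfl⟩; omega
    rw [hun, Finset.sum_union hdisj, himg,
      Finset.sum_image (by intro a ha b hb hab; simp only [Finset.mem_coe, Finset.mem_Icc] at ha hb hab; omega),
      Finset.sum_add_distrib]
  -- even/odd split
  have heo : ∀ F : ℕ → ZMod (p ^ s),
      ∑ i ∈ Finset.Icc 1 (N - 1), F i
        = ∑ j ∈ Finset.Icc 1 m, (F (2 * j) + F (N - 2 * j)) := by
    intro F
    have h1 : Finset.Icc 1 (N - 1)
        = (Finset.Icc 1 m).image (fun j => 2 * j) ∪
            (Finset.Icc 1 m).image (fun j => N - 2 * j) := by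
      ext x
      simp only [Finset.mem_Icc, Finset.mem_union, Finset.mem_image]
      constructor
      · intro hx
        rcases Nat.even_or_odd x with ⟨k, hk⟩ | ⟨k, hk⟩
        · exact Or.inl ⟨k, by omega, by omega⟩
        · exact Or.inr ⟨(N - x) / 2, by omega, by omega⟩
      · rintro (⟨j, hj, rfl⟩ | ⟨j, hj, rfl⟩) <;> omega
    have hdisj : Disjoint ((Finset.Icc 1 m).image (fun j => 2 * j))
        ((Finset.Icc 1 m).image (fun j => N - 2 * j)) := by
      rw [Finset.disjoint_left]
      rintro x hx hx'
      simp only [Finset.mem_image, Finset.mem_Icc] at hx hx'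
      obtain ⟨a, ha, rfl⟩ := hx
      obtain ⟨b, hb, hb'⟩ := hx'
      omega
    rw [h1, Finset.sum_union hdisj,
      Finset.sum_image (by intro a ha b hb hab; simp only at hab; omega),
      Finset.sum_image (by intro a ha b hb hab; simp only [Finset.mem_coe, Finset.mem_Icc] at ha hb hab; omega),
      Finset.sum_add_distrib]
  -- cast lemmas
  have hcast_sub : ∀ j : ℕ, j ≤ N → ((N - j : ℕ) : ZMod (p ^ s)) = 1 - (j : ZMod (p ^ s)) := by
    intro j hj; rw [Nat.cast_sub hj, hNR]
  have hlogNj : ∀ j : ℕ, 1 ≤ j → j ≤ N - 1 →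
      log ((N - j : ℕ) : ZMod N) = log (j : ZMod N) := by
    intro j h1 h2
    have : ((N - j : ℕ) : ZMod N) = -(j : ZMod N) := by
      rw [Nat.cast_sub (by omega), ZMod.natCast_self, zero_sub]
    rw [this, hlog_neg _ (hunit j h1 h2)]
  have hlog2j : ∀ j : ℕ, 1 ≤ j → j ≤ m →
      log ((2 * j : ℕ) : ZMod N) = log (2 : ZMod N) + log (j : ZMod N) := by
    intro j h1 h2
    have hju : IsUnit ((j : ZMod N)) := hunit j h1 (by omega)
    have hc : ((2 * j : ℕ) : ZMod N) = (2 : ZMod N) * (j : ZMod N) := by push_cast; ring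
    rw [hc, hlog' _ _ hu2N hju]
  have hlogN2j : ∀ j : ℕ, 1 ≤ j → j ≤ m →
      log ((N - 2 * j : ℕ) : ZMod N) = log (2 : ZMod N) + log (j : ZMod N) := by
    intro j h1 h2
    rw [hlogNj (2 * j) (by omega) (by omega), hlog2j j h1 h2]
  -- power sums vanish
  have hsum1 : ∑ j ∈ Finset.Icc 1 m, (j : ZMod (p ^ s)) = 0 := by
    have h0 : ((∑ j ∈ Finset.Icc 1 m, 2 * j : ℕ) : ZMod (p ^ s)) = 0 := by
      rw [aux_gauss]
      exact (ZMod.natCast_eq_zero_iff _ _).mpr (hmdvd.mul_right _)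
    push_cast at h0
    rw [← Finset.mul_sum] at h0
    exact (hu2.mul_right_eq_zero).mp h0
  have hu6 : IsUnit (6 : ZMod (p ^ s)) := by
    have h6 : (6 : ZMod (p ^ s)) = 2 * 3 := by norm_num
    rw [h6]; exact hu2.mul hu3
  have hsum2 : ∑ j ∈ Finset.Icc 1 m, (j : ZMod (p ^ s)) ^ 2 = 0 := by
    have h0 : ((∑ j ∈ Finset.Icc 1 m, 6 * j ^ 2 : ℕ) : ZMod (p ^ s)) = 0 := by
      rw [aux_sq]
      exact (ZMod.natCast_eq_zero_iff _ _).mpr ((hmdvd.mul_right _).mul_right _)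
    push_cast at h0
    rw [← Finset.mul_sum] at h0
    exact (hu6.mul_right_eq_zero).mp h0
  have hsumc : ∀ c : ZMod (p ^ s), ∑ _j ∈ Finset.Icc 1 m, c = 0 := by
    intro c
    rw [Finset.sum_const, Nat.card_Icc, Nat.add_sub_cancel, nsmul_eq_mul, hmR, zero_mul]
  -- half sum of logs vanishes
  have hLzero : ∑ j ∈ Finset.Icc 1 m, log (j : ZMod N) = 0 := by
    have h := hsplit fun i => log (i : ZMod N)
    rw [hW] at h
    have h2 : ∑ j ∈ Finset.Icc 1 m, (log ((j : ℕ) : ZMod N) + log ((N - j : ℕ) : ZMod N))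
        = (2 : ZMod (p ^ s)) * ∑ j ∈ Finset.Icc 1 m, log (j : ZMod N) := by
      rw [Finset.mul_sum]
      refine Finset.sum_congr rfl fun j hj => ?_
      rw [Finset.mem_Icc] at hj
      rw [hlogNj j hj.1 (by omega), two_mul]
    rw [h2] at h
    exact (hu2.mul_right_eq_zero).mp h.symm
  -- main identities
  have hA1 : ∑ i ∈ Finset.Icc 1 (N - 1), ((i : ZMod (p ^ s)) ^ 2) * log (i : ZMod N)
      = 2 * (∑ j ∈ Finset.Icc 1 m, (j : ZMod (p ^ s)) ^ 2 * log (j : ZMod N))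
        - 2 * (∑ j ∈ Finset.Icc 1 m, (j : ZMod (p ^ s)) * log (j : ZMod N)) := by
    rw [hsplit fun i => ((i : ZMod (p ^ s)) ^ 2) * log (i : ZMod N)]
    have hpt : ∀ j ∈ Finset.Icc 1 m,
        ((j : ZMod (p ^ s)) ^ 2) * log (j : ZMod N)
          + (((N - j : ℕ) : ZMod (p ^ s)) ^ 2) * log ((N - j : ℕ) : ZMod N)
        = (2 * ((j : ZMod (p ^ s)) ^ 2 * log (j : ZMod N))
            - 2 * ((j : ZMod (p ^ s)) * log (j : ZMod N))) + log (j : ZMod N) := by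
      intro j hj
      rw [Finset.mem_Icc] at hj
      rw [hlogNj j hj.1 (by omega), hcast_sub j (by omega)]
      ring
    rw [Finset.sum_congr rfl hpt, Finset.sum_add_distrib, hLzero, add_zero,
      Finset.sum_sub_distrib, ← Finset.mul_sum, ← Finset.mul_sum]
  have hA2 : ∑ i ∈ Finset.Icc 1 (N - 1), ((i : ZMod (p ^ s)) ^ 2) * log (i : ZMod N)
      = 8 * (∑ j ∈ Finset.Icc 1 m, (j : ZMod (p ^ s)) ^ 2 * log (j : ZMod N))
        - 4 * (∑ j ∈ Finset.Icc 1 m, (j : ZMod (p ^ s)) * log (j : ZMod N)) := by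
    rw [heo fun i => ((i : ZMod (p ^ s)) ^ 2) * log (i : ZMod N)]
    have hpt : ∀ j ∈ Finset.Icc 1 m,
        (((2 * j : ℕ) : ZMod (p ^ s)) ^ 2) * log ((2 * j : ℕ) : ZMod N)
          + (((N - 2 * j : ℕ) : ZMod (p ^ s)) ^ 2) * log ((N - 2 * j : ℕ) : ZMod N)
        = ((8 * ((j : ZMod (p ^ s)) ^ 2 * log (j : ZMod N))
            - 4 * ((j : ZMod (p ^ s)) * log (j : ZMod N))) + log (j : ZMod N))
          + (((8 * log (2 : ZMod N)) * (j : ZMod (p ^ s)) ^ 2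
              - (4 * log (2 : ZMod N)) * (j : ZMod (p ^ s))) + log (2 : ZMod N)) := by
      intro j hj
      rw [Finset.mem_Icc] at hj
      have hc1 : ((2 * j : ℕ) : ZMod (p ^ s)) = 2 * (j : ZMod (p ^ s)) := by push_cast; ring
      have hc2' : ((N - 2 * j : ℕ) : ZMod (p ^ s)) = 1 - 2 * (j : ZMod (p ^ s)) := by
        rw [hcast_sub (2 * j) (by omega)]; push_cast; ring
      rw [hlog2j j hj.1 hj.2, hlogN2j j hj.1 hj.2, hc1, hc2']
      ring
    rw [Finset.sum_congr rfl hpt, Finset.sum_add_distrib, Finset.sum_add_distrib,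
      Finset.sum_add_distrib, hLzero, add_zero, hsumc (log (2 : ZMod N)), add_zero,
      Finset.sum_sub_distrib, Finset.sum_sub_distrib,
      ← Finset.mul_sum, ← Finset.mul_sum, ← Finset.mul_sum, ← Finset.mul_sum,
      hsum1, hsum2, mul_zero, mul_zero, sub_zero, add_zero]
  -- combine
  have key : ∀ A Q T : ZMod (p ^ s), A = 2 * Q - 2 * T → A = 8 * Q - 4 * T →
      A = -(4 * (3 : ZMod (p ^ s))⁻¹) * T := by
    intro A Q T h1 h2
    have h6 : (2 : ZMod (p ^ s)) * T = 2 * (3 * Q) := by linear_combination h2 - h1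
    have h3 : T = 3 * Q := hu2.mul_left_cancel h6
    rw [h1, h3]
    linear_combination (4 * Q) * h31
  exact key _ _ _ hA1 hA2
end

section
/- Both Σ_{i=1}^{N−1} log(i) = 0 and Σ_{i=1}^{N−1} i·log(i) = 0 hold in ℤ/p^sℤ. -/
open Finset

-- sum over Icc 1 (N-1) equals sum over units, N prime
private lemma sum_icc_eq_sum_units {M : Type*} [AddCommMonoid M] (N : ℕ) [Fact N.Prime]
    (f : ZMod N → M) :
    ∑ i ∈ Finset.Icc 1 (N - 1), f (i : ZMod N) = ∑ u : (ZMod N)ˣ, f (u : ZMod N) := by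
  have hN : N.Prime := Fact.out
  haveI : NeZero N := ⟨hN.ne_zero⟩
  have hcop : ∀ a ∈ Finset.Icc 1 (N - 1), Nat.Coprime a N := by
    intro a ha
    simp only [Finset.mem_Icc] at ha
    refine Nat.Coprime.symm ((Nat.Prime.coprime_iff_not_dvd hN).mpr ?_)
    intro hd
    have := Nat.le_of_dvd (by omega) hd
    omega
  refine Finset.sum_bij' (fun a ha => ZMod.unitOfCoprime a (hcop a ha))
    (fun u _ => (u : ZMod N).val) (fun a ha => Finset.mem_univ _) ?_ ?_ ?_ ?_
  · intro u _
    simp only [Finset.mem_Icc]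
    have h1 : (u : ZMod N).val < N := ZMod.val_lt _
    have h2 : (u : ZMod N).val ≠ 0 := by
      simp [ZMod.val_eq_zero]
    omega
  · intro a ha
    simp only [Finset.mem_Icc] at ha
    simp only [ZMod.coe_unitOfCoprime]
    exact ZMod.val_cast_of_lt (by omega)
  · intro u _
    ext
    simp [ZMod.coe_unitOfCoprime, ZMod.natCast_val, ZMod.cast_id]
  · intro a ha
    simp [ZMod.coe_unitOfCoprime]

/-- Both `Σ_{i=1}^{N−1} log(i) = 0` and `Σ_{i=1}^{N−1} i·log(i) = 0` hold in
`ℤ/p^sℤ`, where `log` is a surjective group homomorphism `(ℤ/Nℤ)ˣ → ℤ/p^sℤ`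
(formalized as a function on `ℤ/Nℤ` that is a homomorphism on units and
surjective onto `ℤ/p^sℤ`). -/
theorem sum_log_eq_zero_and_sum_mul_log_eq_zero
    (p N s : ℕ) [Fact p.Prime] [Fact N.Prime]
    (hp : 3 < p) (hs : 1 ≤ s) (hdvd : p ^ s ∣ N - 1)
    (log : ZMod N → ZMod (p ^ s))
    (hlog : ∀ a b : (ZMod N)ˣ, log ((a : ZMod N) * (b : ZMod N)) = log a + log b)
    (hsurj : ∀ c : ZMod (p ^ s), ∃ u : (ZMod N)ˣ, log (u : ZMod N) = c) :
    (∑ i ∈ Finset.Icc 1 (N - 1), log (i : ZMod N) = 0)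
      ∧ (∑ i ∈ Finset.Icc 1 (N - 1), (i : ZMod (p ^ s)) * log (i : ZMod N) = 0) := by
  have hpP : p.Prime := Fact.out
  have hNP : N.Prime := Fact.out
  haveI : NeZero N := ⟨hNP.ne_zero⟩
  haveI : NeZero (p ^ s) := ⟨pow_ne_zero s hpP.ne_zero⟩
  have hN2 : 2 ≤ N := hNP.two_le
  -- 2 is a unit in ZMod (p^s)
  have h2unit : IsUnit (2 : ZMod (p ^ s)) := by
    rw [show ((2 : ZMod (p ^ s)) = ((2 : ℕ) : ZMod (p ^ s))) by norm_cast]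
    rw [ZMod.isUnit_iff_coprime]
    exact Nat.Coprime.pow_right _ ((Nat.coprime_primes Nat.prime_two hpP).mpr (by omega))
  have half : ∀ x : ZMod (p ^ s), x + x = 0 → x = 0 := by
    intro x hx
    have : (2 : ZMod (p ^ s)) * x = 0 := by rw [two_mul]; exact hx
    obtain ⟨u, hu⟩ := h2unit
    rwa [← hu, Units.mul_right_eq_zero] at this
  -- log 1 = 0
  have hlog1 : log (1 : ZMod N) = 0 := by
    have := hlog 1 1
    simp only [Units.val_one, one_mul] at this
    linear_combination -this
  -- log (-1) = 0
  have hlogneg1 : log (-1 : ZMod N) = 0 := by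
    have := hlog (-1) (-1)
    simp only [Units.val_neg, Units.val_one, neg_mul_neg, one_mul] at this
    rw [hlog1] at this
    exact half _ this.symm
  -- log(-x) = log(x) for units
  have hlogneg : ∀ u : (ZMod N)ˣ, log (-(u : ZMod N)) = log (u : ZMod N) := by
    intro u
    have := hlog (-1) u
    simp only [Units.val_neg, Units.val_one, neg_mul, one_mul] at this
    rw [this, hlogneg1, zero_add]
  -- sum over all of ZMod (p^s) is zero
  have hsumall : ∑ c : ZMod (p ^ s), c = 0 := by
    have h1 : ∑ c : ZMod (p ^ s), c = ∑ c : ZMod (p ^ s), -c :=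
      Fintype.sum_equiv (Equiv.neg _) _ _ (fun x => (neg_neg x).symm)
    rw [Finset.sum_neg_distrib] at h1
    exact half _ (by linear_combination h1)
  -- all fibers of log have the same cardinality
  have hfib : ∀ c : ZMod (p ^ s),
      (Finset.univ.filter (fun u : (ZMod N)ˣ => log (u : ZMod N) = c)).card
        = (Finset.univ.filter (fun u : (ZMod N)ˣ => log (u : ZMod N) = 0)).card := by
    intro c
    obtain ⟨v, hv⟩ := hsurj c
    have hvinv : log ((v⁻¹ : (ZMod N)ˣ) : ZMod N) = -c := by
      have := hlog v v⁻¹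
      rw [← Units.val_mul, mul_inv_cancel, Units.val_one, hlog1, hv] at this
      linear_combination -this
    refine Finset.card_bij' (fun u _ => v⁻¹ * u) (fun w _ => v * w) ?_ ?_ ?_ ?_
    · intro u hu
      simp only [Finset.mem_filter, Finset.mem_univ, true_and] at hu ⊢
      rw [Units.val_mul, hlog, hvinv, hu]; ring
    · intro w hw
      simp only [Finset.mem_filter, Finset.mem_univ, true_and] at hw ⊢
      rw [Units.val_mul, hlog, hv, hw]; ring
    · intro u _; group
    · intro w _; group
  -- first sum
  have hS : ∑ i ∈ Finset.Icc 1 (N - 1), log (i : ZMod N) = 0 := by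
    rw [sum_icc_eq_sum_units N log]
    have key : ∑ u : (ZMod N)ˣ, log (u : ZMod N)
        = ∑ j : ZMod (p ^ s), ∑ _u ∈ Finset.univ.filter
            (fun u : (ZMod N)ˣ => log (u : ZMod N) = j), j :=
      (Finset.sum_fiberwise' Finset.univ (fun u : (ZMod N)ˣ => log (u : ZMod N))
        (fun c => c)).symm
    rw [key]
    have hconst : ∀ c : ZMod (p ^ s),
        ∑ _u ∈ Finset.univ.filter (fun u : (ZMod N)ˣ => log (u : ZMod N) = c), c
          = (Finset.univ.filter (fun u : (ZMod N)ˣ => log (u : ZMod N) = 0)).card • c := by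
      intro c
      rw [Finset.sum_const, hfib c]
    rw [Finset.sum_congr rfl (fun c _ => hconst c), ← Finset.smul_sum, hsumall, smul_zero]
  refine ⟨hS, ?_⟩
  -- second sum
  have hN1 : ((N : ℕ) : ZMod (p ^ s)) = 1 := by
    have : ((N - 1 : ℕ) : ZMod (p ^ s)) = 0 := (ZMod.natCast_eq_zero_iff _ _).mpr hdvd
    have hN' : N = (N - 1) + 1 := by omega
    rw [hN', Nat.cast_add, this, Nat.cast_one, zero_add]
  have hpair : ∑ i ∈ Finset.Icc 1 (N - 1), (i : ZMod (p ^ s)) * log (i : ZMod N)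
      = ∑ i ∈ Finset.Icc 1 (N - 1),
        ((N - i : ℕ) : ZMod (p ^ s)) * log (((N - i : ℕ) : ZMod N)) := by
    refine Finset.sum_nbij' (fun i => N - i) (fun i => N - i) ?_ ?_ ?_ ?_ ?_
    all_goals intro a ha
    · simp only [Finset.mem_Icc] at ha ⊢; omega
    · simp only [Finset.mem_Icc] at ha ⊢; omega
    · simp only [Finset.mem_Icc] at ha; show N - (N - a) = a; omega
    · simp only [Finset.mem_Icc] at ha; show N - (N - a) = a; omega
    · simp only [Finset.mem_Icc] at ha
      show ((a : ℕ) : ZMod (p ^ s)) * log ((a : ℕ) : ZMod N)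
        = ((N - (N - a) : ℕ) : ZMod (p ^ s)) * log (((N - (N - a) : ℕ)) : ZMod N)
      have h1 : N - (N - a) = a := by omega
      rw [h1]
  have hstep : ∀ i ∈ Finset.Icc 1 (N - 1),
      ((N - i : ℕ) : ZMod (p ^ s)) * log (((N - i : ℕ) : ZMod N))
        = (1 - (i : ZMod (p ^ s))) * log ((i : ZMod N)) := by
    intro i hi
    simp only [Finset.mem_Icc] at hi
    have hle : i ≤ N := by omega
    have hc1 : ((N - i : ℕ) : ZMod (p ^ s)) = 1 - (i : ZMod (p ^ s)) := by
      rw [Nat.cast_sub hle, hN1]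
    have hc2 : ((N - i : ℕ) : ZMod N) = -(i : ZMod N) := by
      rw [Nat.cast_sub hle, ZMod.natCast_self, zero_sub]
    have hiu : IsUnit ((i : ℕ) : ZMod N) := by
      rw [ZMod.isUnit_iff_coprime]
      refine Nat.Coprime.symm ((Nat.Prime.coprime_iff_not_dvd hNP).mpr ?_)
      intro hd
      have := Nat.le_of_dvd (by omega) hd
      omega
    obtain ⟨u, hu⟩ := hiu
    rw [hc1, hc2, ← hu, hlogneg u]
  have hTT : ∑ i ∈ Finset.Icc 1 (N - 1), (i : ZMod (p ^ s)) * log (i : ZMod N)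
      = ∑ i ∈ Finset.Icc 1 (N - 1), (1 - (i : ZMod (p ^ s))) * log (i : ZMod N) :=
    hpair.trans (Finset.sum_congr rfl hstep)
  have hadd : (∑ i ∈ Finset.Icc 1 (N - 1), (i : ZMod (p ^ s)) * log (i : ZMod N))
      + (∑ i ∈ Finset.Icc 1 (N - 1), (i : ZMod (p ^ s)) * log (i : ZMod N))
      = ∑ i ∈ Finset.Icc 1 (N - 1), log (i : ZMod N) := by
    nth_rewrite 2 [hTT]
    rw [← Finset.sum_add_distrib]
    refine Finset.sum_congr rfl (fun i _ => by ring)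
  rw [hS] at hadd
  exact half _ hadd
end

section
/- Let g(x) = Σ_{i=0}^m α_i x^i ∈ ℤ_p[x] be monic distinguished of degree m ≥ 1, let T = ℤ_p[x]/(g(x)), and let r ≥ 1 and 0 ≤ n ≤ m be integers. The following are equivalent: (i) there is a ring homomorphism φ : T → (ℤ/p^rℤ)[ε]/(ε^{n+1}) with φ(x̄) = ε; (ii) there exist a generator y of T and a ring homomorphism φ : T → (ℤ/p^rℤ)[ε]/(ε^{n+1}) with φ(y) = ε; (iii) for every generator y of T there is a ring homomorphism φ : T → (ℤ/p^rℤ)[ε]/(ε^{n+1}) with φ(y) = ε; (iv) p^r divides α_j in ℤ_p for every j with 0 ≤ j ≤ n. Moreover, any such homomorphism φ is automatically surjective. -/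
open Polynomial

/-- The ring `T = ℤ_p[x]/(g(x))`. -/
abbrev PadicQuot (p : ℕ) [Fact p.Prime] (g : Polynomial ℤ_[p]) :=
  Polynomial ℤ_[p] ⧸ Ideal.span {g}

/-- The image `x̄` of `x` in `T = ℤ_p[x]/(g(x))`. -/
noncomputable def xBar (p : ℕ) [Fact p.Prime] (g : Polynomial ℤ_[p]) : PadicQuot p g :=
  Ideal.Quotient.mk (Ideal.span {g}) X

/-- `y ∈ T` is a generator if the principal ideals `(y)` and `(x̄)` coincide. -/
def IsGenerator (p : ℕ) [Fact p.Prime] (g : Polynomial ℤ_[p]) (y : PadicQuot p g) : Prop :=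
  Ideal.span {y} = Ideal.span {xBar p g}

/-- The ring `(ℤ/p^rℤ)[ε]/(ε^{n+1})`, as a quotient of a polynomial ring. -/
abbrev TruncDual (q n : ℕ) :=
  Polynomial (ZMod q) ⧸ Ideal.span {(X : Polynomial (ZMod q)) ^ (n + 1)}

/-- The distinguished nilpotent element `ε` of `(ℤ/qℤ)[ε]/(ε^{n+1})`. -/
noncomputable def epsElt (q n : ℕ) : TruncDual q n :=
  Ideal.Quotient.mk (Ideal.span {(X : Polynomial (ZMod q)) ^ (n + 1)}) X

namespace PadicAux

open AdjoinRoot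

variable (q n : ℕ)

noncomputable abbrev fpow : Polynomial (ZMod q) := X ^ (n + 1)

noncomputable abbrev Sdl := AdjoinRoot (fpow q n)

noncomputable def am : ZMod q →+* Sdl q n := AdjoinRoot.of _

variable {q n}

lemma eps_pow : (root (fpow q n)) ^ (n + 1) = 0 := by
  rw [root, ← map_pow, mk_self]

lemma root_pow_eq_zero {k : ℕ} (hk : n + 1 ≤ k) : (root (fpow q n)) ^ k = 0 := by
  calc (root (fpow q n)) ^ k
      = (root (fpow q n)) ^ (n + 1) * (root (fpow q n)) ^ (k - (n + 1)) := by
        rw [← pow_add]; congr 1; omega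
    _ = 0 := by rw [eps_pow, zero_mul]

lemma cancel_key {c : ZMod q} (h : am q n c * (root (fpow q n)) ^ n = 0) : c = 0 := by
  have h0 : AdjoinRoot.mk (fpow q n) (C c * X ^ n) = 0 := by
    rw [map_mul, map_pow, mk_X]
    exact h
  rw [mk_eq_zero] at h0
  obtain ⟨k, hk⟩ := h0
  have h1 := congrArg (fun P => Polynomial.coeff P n) hk
  rw [coeff_mul_X_pow'] at h1
  rw [show (X : Polynomial (ZMod q)) ^ (n+1) * k = k * X ^ (n+1) from mul_comm _ _,
    coeff_mul_X_pow'] at h1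
  simpa using h1

lemma exists_rep (z : Sdl q n) [Nontrivial (ZMod q)] :
    ∃ f : Polynomial (ZMod q), f.natDegree < n + 1 ∧ AdjoinRoot.mk (fpow q n) f = z := by
  obtain ⟨f, rfl⟩ := mk_surjective z
  refine ⟨f %ₘ fpow q n, ?_, ?_⟩
  · rcases eq_or_ne (f %ₘ fpow q n) 0 with h | h
    · simp [h]
    · have := degree_modByMonic_lt f (monic_X_pow (n + 1) (R := ZMod q))
      rw [degree_X_pow] at this
      exact natDegree_lt_iff_degree_lt h |>.mpr (by exact_mod_cast this)
  · rw [modByMonic_eq_sub_mul_div f _, map_sub, map_mul, mk_self,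
      zero_mul, sub_zero]

lemma finite_S [NeZero q] : Finite (Sdl q n) := by
  haveI : Nontrivial (ZMod q) ∨ Subsingleton (ZMod q) := by
    rcases subsingleton_or_nontrivial (ZMod q) with h | h
    · exact Or.inr h
    · exact Or.inl h
  rcases this with h | h
  · have hs : Function.Surjective
        (fun v : Fin (n + 1) → ZMod q =>
          ∑ i : Fin (n + 1), am q n (v i) * (root (fpow q n)) ^ (i : ℕ)) := by
      intro z
      obtain ⟨f, hdeg, rfl⟩ := exists_rep z
      refine ⟨fun i => f.coeff i, ?_⟩
      conv_rhs => rw [f.as_sum_range' (n + 1) hdeg]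
      rw [map_sum]
      simp only
      rw [Fin.sum_univ_eq_sum_range (fun i => am q n (f.coeff i) * root (fpow q n) ^ i)]
      refine Finset.sum_congr rfl fun i _ => ?_
      rw [← C_mul_X_pow_eq_monomial, map_mul, map_pow, mk_X]
      rfl
    exact Finite.of_surjective _ hs
  · -- ZMod q subsingleton: quotient of subsingleton polynomial ring? Polynomial trivial ⇒ quotient trivial
    haveI : Subsingleton (Polynomial (ZMod q)) := inferInstance
    haveI : Subsingleton (Sdl q n) := Quotient.instSubsingletonQuotient _
    exact Finite.of_subsingleton

lemma surj_of_eps_mem {A : Type*} [CommRing A] (φ : A →+* Sdl q n)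
    (h : root (fpow q n) ∈ Set.range φ) : Function.Surjective φ := by
  intro z
  induction z using AdjoinRoot.induction_on with
  | ih f =>
    induction f using Polynomial.induction_on' with
    | add s t hs ht =>
      obtain ⟨a, ha⟩ := hs; obtain ⟨b, hb⟩ := ht
      exact ⟨a + b, by rw [map_add, ha, hb, ← map_add]⟩
    | monomial k a =>
      obtain ⟨t, ht⟩ := h
      obtain ⟨z, hz⟩ := ZMod.intCast_surjective a
      refine ⟨(z : A) * t ^ k, ?_⟩
      rw [map_mul, map_pow, ht, map_intCast, ← hz, ← C_mul_X_pow_eq_monomial, map_mul, map_pow,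
        mk_X]
      rw [show AdjoinRoot.mk (fpow q n) (C ((z : ZMod q))) = am q n ((z : ZMod q)) from rfl,
        map_intCast]

lemma eps_pow_stable {u b : Sdl q n}
    (hb : root (fpow q n) * (u * b) = root (fpow q n)) :
    ∀ k ≤ n, (root (fpow q n)) ^ n * (u * b) ^ k = (root (fpow q n)) ^ n := by
  set e := root (fpow q n) with he
  intro k
  induction k with
  | zero => simp
  | succ k ih =>
    intro hk
    have hn1 : 1 ≤ n := le_trans (Nat.succ_le_succ (Nat.zero_le k)) hk
    have hsplit : e ^ n = e ^ (n - 1) * e := by rw [← pow_succ]; congr 1; omega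
    calc e ^ n * (u * b) ^ (k + 1)
        = e ^ (n - 1) * (e * (u * b)) * (u * b) ^ k := by rw [hsplit, pow_succ]; ring
      _ = e ^ n * (u * b) ^ k := by rw [hb, ← hsplit]
      _ = e ^ n := ih (Nat.le_of_succ_le hk)

lemma coeffs_vanish {M : ℕ} (hnM : n ≤ M) {a : ℕ → ZMod q} {u b : Sdl q n}
    (hsum : ∑ i ∈ Finset.range (M + 1), am q n (a i) * (u * root (fpow q n)) ^ i = 0)
    (hb : root (fpow q n) * (u * b) = root (fpow q n)) :
    ∀ j ≤ n, a j = 0 := by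
  set e := root (fpow q n) with he
  intro j
  induction j using Nat.strong_induction_on with
  | _ j ih =>
    intro hj
    have H := congrArg (fun z => z * (e ^ (n - j) * b ^ j)) hsum
    simp only [zero_mul, Finset.sum_mul] at H
    have Hj : ∑ i ∈ Finset.range (M + 1),
        am q n (a i) * (u * e) ^ i * (e ^ (n - j) * b ^ j) = am q n (a j) * e ^ n := by
      rw [Finset.sum_eq_single j]
      · have h1 : (u * e) ^ j * (e ^ (n - j) * b ^ j) = e ^ n * (u * b) ^ j := by
          calc (u * e) ^ j * (e ^ (n - j) * b ^ j)
              = (u * b) ^ j * (e ^ j * e ^ (n - j)) := by rw [mul_pow, mul_pow]; ring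
            _ = e ^ n * (u * b) ^ j := by
                rw [← pow_add, show j + (n - j) = n from by omega]; ring
        rw [mul_assoc, h1, ← mul_assoc, mul_assoc, eps_pow_stable hb j hj]
      · intro i hi hij
        rcases lt_or_gt_of_ne hij with h | h
        · rw [ih i h (le_trans (le_of_lt h) hj), map_zero, zero_mul, zero_mul]
        · have h2 : (u * e) ^ i * (e ^ (n - j) * b ^ j) = (u ^ i * b ^ j) * e ^ (i + (n - j)) := by
            rw [mul_pow, pow_add]; ring
          have hz : e ^ (i + (n - j)) = 0 := root_pow_eq_zero (by omega)
          rw [mul_assoc, h2, hz, mul_zero, mul_zero]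
      · intro hjmem
        exact absurd (Finset.mem_range.mpr (by omega)) hjmem
    rw [Hj] at H
    exact cancel_key H

variable {p r : ℕ} [Fact p.Prime]

lemma ringhom_eq (ψ : ℤ_[p] →+* Sdl (p ^ r) n) (z : ℤ_[p]) :
    ψ z = am (p ^ r) n ((z.appr r : ℕ) : ZMod (p ^ r)) := by
  obtain ⟨c, hc⟩ := Ideal.mem_span_singleton.mp (PadicInt.appr_spec r z)
  have hz : z = ((z.appr r : ℕ) : ℤ_[p]) + (p : ℤ_[p]) ^ r * c := by rw [← hc]; ring
  have hp0 : ((p : Sdl (p ^ r) n)) ^ r = 0 := by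
    have h1 : (((p ^ r : ℕ) : ZMod (p ^ r)) : ZMod (p ^ r)) = 0 := by
      exact_mod_cast ZMod.natCast_self (p ^ r)
    have h2 : ((p ^ r : ℕ) : Sdl (p ^ r) n) = am (p ^ r) n ((p ^ r : ℕ) : ZMod (p ^ r)) :=
      (map_natCast (am (p ^ r) n) _).symm
    rw [h1, map_zero] at h2
    rw [← h2]
    push_cast
    ring
  have hmain : ψ z = ((z.appr r : ℕ) : Sdl (p ^ r) n) := by
    conv_lhs => rw [hz]
    rw [map_add, map_mul, map_pow, map_natCast, map_natCast, hp0, zero_mul, add_zero]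
  rw [hmain, map_natCast]

lemma exists_hom {g : Polynomial ℤ_[p]}
    (hdvd : ∀ j ≤ n, (p : ℤ_[p]) ^ r ∣ g.coeff j) :
    ∃ φ : AdjoinRoot g →+* Sdl (p ^ r) n, φ (root g) = root (fpow (p ^ r) n) := by
  have h0 : eval₂ ((am (p ^ r) n).comp (PadicInt.toZModPow r)) (root (fpow (p ^ r) n)) g = 0 := by
    rw [eval₂_eq_sum_range]
    refine Finset.sum_eq_zero fun i hi => ?_
    rcases le_or_gt i n with h | h
    · have hz : PadicInt.toZModPow r (g.coeff i) = 0 := by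
        rw [← RingHom.mem_ker, PadicInt.ker_toZModPow, Ideal.mem_span_singleton]
        exact hdvd i h
      rw [RingHom.comp_apply, hz, map_zero, zero_mul]
    · rw [root_pow_eq_zero (by omega), mul_zero]
  exact ⟨AdjoinRoot.lift _ _ h0, AdjoinRoot.lift_root h0⟩

lemma dvd_of_hom {g : Polynomial ℤ_[p]} (hn : n ≤ g.natDegree)
    {y : AdjoinRoot g} (hcex : ∃ c, root g = y * c) (hdex : ∃ d, y = root g * d)
    (φ : AdjoinRoot g →+* Sdl (p ^ r) n) (hφ : φ y = root (fpow (p ^ r) n)) :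
    ∀ j ≤ n, (p : ℤ_[p]) ^ r ∣ g.coeff j := by
  obtain ⟨c, hc⟩ := hcex; obtain ⟨d, hd⟩ := hdex
  set e := root (fpow (p ^ r) n) with he
  set F : Polynomial ℤ_[p] →+* Sdl (p ^ r) n := φ.comp (AdjoinRoot.mk g) with hF
  have hFg : F g = 0 := by rw [hF, RingHom.comp_apply, mk_self, map_zero]
  have hFeval : F g = eval₂ (F.comp Polynomial.C) (F X) g := by
    conv_lhs => rw [← eval₂_C_X (p := g)]
    rw [hom_eval₂]
  have hroot : φ (root g) = F X := rfl
  have hFX : F X = e * φ c := by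
    rw [← hroot, hc, map_mul, hφ]
  have hrel : e * (φ c * φ d) = e := by
    conv_rhs => rw [← hφ, hd]
    rw [map_mul, hroot, hFX]
    ring
  have hsum : ∑ i ∈ Finset.range (g.natDegree + 1),
      am (p ^ r) n (((g.coeff i).appr r : ℕ) : ZMod (p ^ r)) * (φ c * e) ^ i = 0 := by
    have h1 := hFg
    rw [hFeval, eval₂_eq_sum_range] at h1
    refine Eq.trans (Finset.sum_congr rfl fun i _ => ?_) h1
    rw [← ringhom_eq (F.comp Polynomial.C) (g.coeff i), hFX, mul_comm e (φ c)]
  have hvan := coeffs_vanish hn hsum hrel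
  intro j hj
  have h0 := hvan j hj
  rw [ZMod.natCast_eq_zero_iff] at h0
  obtain ⟨t, ht⟩ := h0
  obtain ⟨c', hc'⟩ := Ideal.mem_span_singleton.mp (PadicInt.appr_spec r (g.coeff j))
  have hcast : (((g.coeff j).appr r : ℕ) : ℤ_[p]) = (p : ℤ_[p]) ^ r * (t : ℤ_[p]) := by
    rw [ht]; push_cast; ring
  refine ⟨c' + (t : ℤ_[p]), ?_⟩
  have : g.coeff j = (g.coeff j - ((g.coeff j).appr r : ℕ)) + ((g.coeff j).appr r : ℕ) := by ring
  rw [this, hc', hcast]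
  ring

lemma hom_for_generator {g : Polynomial ℤ_[p]} (hr : 1 ≤ r)
    (hdvd : ∀ j ≤ n, (p : ℤ_[p]) ^ r ∣ g.coeff j)
    {y : AdjoinRoot g} (hcex : ∃ c, root g = y * c) (hdex : ∃ d, y = root g * d) :
    ∃ φ : AdjoinRoot g →+* Sdl (p ^ r) n, φ y = root (fpow (p ^ r) n) := by
  obtain ⟨φ₀, hφ₀⟩ := exists_hom (n := n) hdvd
  obtain ⟨c, hc⟩ := hcex; obtain ⟨d, hd⟩ := hdex
  set e := root (fpow (p ^ r) n) with he
  rcases Nat.eq_zero_or_pos n with hn0 | hn1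
  · -- n = 0 : e = 0 and φ₀ y = φ₀(root g) * φ₀ d = e * φ₀ d = 0
    have he0 : e = 0 := by
      have := eps_pow (q := p ^ r) (n := n)
      rw [hn0, pow_one] at this
      rw [he, hn0]
      exact this
    refine ⟨φ₀, ?_⟩
    rw [hd, map_mul, hφ₀, he0, zero_mul]
  · -- n ≥ 1
    set w := φ₀ d with hw
    set v := φ₀ c with hv
    have h1 : φ₀ y = e * w := by rw [hd, map_mul, hφ₀]
    have h2 : e = e * w * v := by
      conv_lhs => rw [← hφ₀, hc, map_mul, h1]
    obtain ⟨h, hh⟩ := mk_surjective (1 - w * v)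
    have h3 : AdjoinRoot.mk (fpow (p ^ r) n) (X * h) = 0 := by
      rw [map_mul, mk_X, hh]
      calc e * (1 - w * v) = e - e * w * v := by ring
        _ = 0 := by rw [← h2, sub_self]
    rw [mk_eq_zero] at h3
    obtain ⟨k, hk⟩ := h3
    have hXcancel : ∀ a b : Polynomial (ZMod (p ^ r)), X * a = X * b → a = b := by
      intro a b hab
      ext i
      have := congrArg (fun P => Polynomial.coeff P (i + 1)) hab
      simpa [coeff_X_mul] using this
    have hh2 : h = X ^ n * k := by
      apply hXcancel
      rw [hk]
      simp only [fpow]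
      rw [pow_succ']
      ring
    have hnil : 1 - w * v = e ^ n * AdjoinRoot.mk (fpow (p ^ r) n) k := by
      rw [← hh, hh2, map_mul, map_pow, mk_X]
    have hsq : (e ^ n * AdjoinRoot.mk (fpow (p ^ r) n) k) ^ 2 = 0 := by
      rw [mul_pow, ← pow_mul, root_pow_eq_zero (by omega), zero_mul]
    have hunit : IsUnit w := by
      refine IsUnit.of_mul_eq_one (a := w) (v * (1 + e ^ n * AdjoinRoot.mk (fpow (p ^ r) n) k)) ?_
      have hwv : w * v = 1 - e ^ n * AdjoinRoot.mk (fpow (p ^ r) n) k := by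
        rw [← hnil]; ring
      calc w * (v * (1 + e ^ n * AdjoinRoot.mk (fpow (p ^ r) n) k))
          = (w * v) * (1 + e ^ n * AdjoinRoot.mk (fpow (p ^ r) n) k) := by ring
        _ = 1 - (e ^ n * AdjoinRoot.mk (fpow (p ^ r) n) k) ^ 2 := by rw [hwv]; ring
        _ = 1 := by rw [hsq, sub_zero]
    obtain ⟨wu, hwu⟩ := hunit
    have hτ0 : eval₂ (am (p ^ r) n) (w * e) (fpow (p ^ r) n) = 0 := by
      rw [eval₂_X_pow, mul_pow, eps_pow, mul_zero]
    set τ : Sdl (p ^ r) n →+* Sdl (p ^ r) n := AdjoinRoot.lift (am (p ^ r) n) (w * e) hτ0 with hτ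
    have hτe : τ e = w * e := AdjoinRoot.lift_root hτ0
    haveI : Nontrivial (ZMod (p ^ r)) := by
      haveI : Fact (1 < p ^ r) :=
        ⟨Nat.one_lt_pow (by omega) (Fact.out : p.Prime).one_lt⟩
      infer_instance
    haveI : NeZero (p ^ r) := ⟨pow_ne_zero r (Fact.out : p.Prime).ne_zero⟩
    haveI : Finite (Sdl (p ^ r) n) := finite_S
    have hinj : Function.Injective τ := by
      rw [injective_iff_map_eq_zero]
      intro z hz
      obtain ⟨f, hdegf, rfl⟩ := exists_rep z
      have hev : ∑ i ∈ Finset.range (n + 1),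
          am (p ^ r) n (f.coeff i) * (w * e) ^ i = 0 := by
        rw [← eval₂_eq_sum_range' (am (p ^ r) n) hdegf (w * e), ← AdjoinRoot.lift_mk hτ0 f]
        exact hz
      have hb : e * (w * (wu⁻¹ : (Sdl (p ^ r) n)ˣ)) = e := by
        rw [← hwu, Units.mul_inv, mul_one]
      have hvan := coeffs_vanish (le_refl n) hev hb
      have hf0 : f = 0 := by
        ext i
        rcases le_or_gt i n with h | h
        · simpa using hvan i h
        · simpa using f.coeff_eq_zero_of_natDegree_lt (by omega)
      rw [hf0, map_zero]
    have hbij : Function.Bijective τ := Finite.injective_iff_bijective.mp hinj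
    set σ := RingEquiv.ofBijective τ hbij with hσ
    refine ⟨(σ.symm : Sdl (p ^ r) n →+* Sdl (p ^ r) n).comp φ₀, ?_⟩
    have hσe : σ e = w * e := hτe
    rw [RingHom.comp_apply, h1]
    rw [show e * w = σ e from by rw [hσe]; ring]
    exact σ.symm_apply_apply e

end PadicAux

/-- Let `g(x) = Σ_{i=0}^m α_i x^i ∈ ℤ_p[x]` be monic distinguished of degree
`m ≥ 1`, let `T = ℤ_p[x]/(g(x))`, and let `r ≥ 1` and `0 ≤ n ≤ m`.  The
following are equivalent: (i) there is a ring homomorphism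
`φ : T → (ℤ/p^rℤ)[ε]/(ε^{n+1})` with `φ(x̄) = ε`; (ii) there exist a generator
`y` of `T` and a ring homomorphism `φ` with `φ(y) = ε`; (iii) for every
generator `y` of `T` there is a ring homomorphism `φ` with `φ(y) = ε`; (iv)
`p^r` divides `α_j` in `ℤ_p` for every `0 ≤ j ≤ n`.  Moreover, any such
homomorphism is automatically surjective. -/


theorem padicQuot_hom_to_trunc_iff
    (p : ℕ) [Fact p.Prime] (m : ℕ) (hm : 1 ≤ m) (g : Polynomial ℤ_[p])
    (hmonic : g.Monic) (hdeg : g.natDegree = m)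
    (hdist : ∀ i < m, (p : ℤ_[p]) ∣ g.coeff i)
    (r n : ℕ) (hr : 1 ≤ r) (hn : n ≤ m) :
    ((∃ φ : PadicQuot p g →+* TruncDual (p ^ r) n, φ (xBar p g) = epsElt (p ^ r) n)
        ↔ (∃ y : PadicQuot p g, IsGenerator p g y ∧
            ∃ φ : PadicQuot p g →+* TruncDual (p ^ r) n, φ y = epsElt (p ^ r) n))
    ∧ ((∃ φ : PadicQuot p g →+* TruncDual (p ^ r) n, φ (xBar p g) = epsElt (p ^ r) n)
        ↔ (∀ y : PadicQuot p g, IsGenerator p g y →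
            ∃ φ : PadicQuot p g →+* TruncDual (p ^ r) n, φ y = epsElt (p ^ r) n))
    ∧ ((∃ φ : PadicQuot p g →+* TruncDual (p ^ r) n, φ (xBar p g) = epsElt (p ^ r) n)
        ↔ (∀ j ≤ n, ((p : ℤ_[p]) ^ r) ∣ g.coeff j))
    ∧ (∀ φ : PadicQuot p g →+* TruncDual (p ^ r) n, ∀ y : PadicQuot p g,
        IsGenerator p g y → φ y = epsElt (p ^ r) n → Function.Surjective φ) := by
  classical
  have hx : xBar p g = AdjoinRoot.root g := rfl
  have hgen : ∀ y : PadicQuot p g, IsGenerator p g y →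
      (∃ c, xBar p g = y * c) ∧ (∃ d, y = xBar p g * d) := by
    intro y hy
    constructor
    · have hmem : xBar p g ∈ Ideal.span {y} := by
        rw [hy]; exact Ideal.mem_span_singleton_self _
      obtain ⟨c, hc⟩ := Ideal.mem_span_singleton.mp hmem
      exact ⟨c, hc⟩
    · have hmem : y ∈ Ideal.span {xBar p g} := by
        rw [← hy]; exact Ideal.mem_span_singleton_self _
      obtain ⟨d, hd⟩ := Ideal.mem_span_singleton.mp hmem
      exact ⟨d, hd⟩
  have hndeg : n ≤ g.natDegree := by rw [hdeg]; exact hn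
  have hxgen : IsGenerator p g (xBar p g) := rfl
  have h14 : (∃ φ : PadicQuot p g →+* TruncDual (p ^ r) n, φ (xBar p g) = epsElt (p ^ r) n) →
      ∀ j ≤ n, ((p : ℤ_[p]) ^ r) ∣ g.coeff j := by
    rintro ⟨φ, hφ⟩
    exact PadicAux.dvd_of_hom hndeg (hgen _ hxgen).1 (hgen _ hxgen).2 φ hφ
  have h24 : (∃ y : PadicQuot p g, IsGenerator p g y ∧
      ∃ φ : PadicQuot p g →+* TruncDual (p ^ r) n, φ y = epsElt (p ^ r) n) →
      ∀ j ≤ n, ((p : ℤ_[p]) ^ r) ∣ g.coeff j := by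
    rintro ⟨y, hy, φ, hφ⟩
    exact PadicAux.dvd_of_hom hndeg (hgen y hy).1 (hgen y hy).2 φ hφ
  have h43 : (∀ j ≤ n, ((p : ℤ_[p]) ^ r) ∣ g.coeff j) →
      ∀ y : PadicQuot p g, IsGenerator p g y →
        ∃ φ : PadicQuot p g →+* TruncDual (p ^ r) n, φ y = epsElt (p ^ r) n := by
    intro hdvd y hy
    exact PadicAux.hom_for_generator hr hdvd (hgen y hy).1 (hgen y hy).2
  refine ⟨⟨fun h => ⟨xBar p g, hxgen, h⟩, fun h => h43 (h24 h) _ hxgen⟩,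
      ⟨fun h => h43 (h14 h), fun h => h _ hxgen⟩,
      ⟨h14, fun h => h43 h _ hxgen⟩, ?_⟩
  intro φ y hy hφ
  exact PadicAux.surj_of_eps_mem φ ⟨y, hφ⟩
end

section
/- Let f(y) ∈ ℤ_p[y] be a monic polynomial with f(y) ≡ y^{deg f} (mod p) and f(0) ≠ 0, and let R = ℤ_p[y]/(y·f(y)) with ȳ the image of y. Then: (a) the annihilator in R of the principal ideal (ȳ) is the principal ideal (f(ȳ)); and (b) every nonzero ideal of R contained in (f(ȳ)) equals p^i·(f(ȳ)) for some integer i ≥ 0. -/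
open Polynomial

/-- The ring `R = ℤ_p[y]/(y·f(y))`. -/
abbrev PadicQuotYF (p : ℕ) [Fact p.Prime] (f : Polynomial ℤ_[p]) :=
  Polynomial ℤ_[p] ⧸ Ideal.span {X * f}

/-- The image `ȳ` of `y` in `R = ℤ_p[y]/(y·f(y))`. -/
noncomputable def yBar (p : ℕ) [Fact p.Prime] (f : Polynomial ℤ_[p]) : PadicQuotYF p f :=
  Ideal.Quotient.mk (Ideal.span {X * f}) X

/-- The element `f(ȳ)` of `R = ℤ_p[y]/(y·f(y))` (the image of `f`). -/
noncomputable def fBar (p : ℕ) [Fact p.Prime] (f : Polynomial ℤ_[p]) : PadicQuotYF p f :=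
  Ideal.Quotient.mk (Ideal.span {X * f}) f


section Aux

open Polynomial

variable (p : ℕ) [Fact p.Prime] (f : Polynomial ℤ_[p])

lemma aux_mem_span_fbar (x : Polynomial ℤ_[p] ⧸ Ideal.span ({X * f} : Set (Polynomial ℤ_[p]))) :
    x ∈ Ideal.span {Ideal.Quotient.mk _ f} ↔
      ∃ c : ℤ_[p], x = Ideal.Quotient.mk _ (C c * f) := by
  rw [Ideal.mem_span_singleton]
  constructor
  · rintro ⟨r, hr⟩
    obtain ⟨g, rfl⟩ := Ideal.Quotient.mk_surjective r
    refine ⟨g.coeff 0, ?_⟩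
    rw [hr, ← map_mul, Ideal.Quotient.eq]
    rw [Ideal.mem_span_singleton]
    have : X ∣ g - C (g.coeff 0) := by
      rw [X_dvd_iff]; simp
    obtain ⟨q, hq⟩ := this
    refine ⟨q, ?_⟩
    ring_nf
    linear_combination (f * hq)
  · rintro ⟨c, rfl⟩
    refine ⟨Ideal.Quotient.mk _ (C c), ?_⟩
    rw [← map_mul, mul_comm (C c) f]

lemma aux_eq_zero_iff (hf : f ≠ 0) (c : ℤ_[p]) :
    (Ideal.Quotient.mk (Ideal.span ({X * f} : Set (Polynomial ℤ_[p]))) (C c * f) = 0)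
      ↔ c = 0 := by
  rw [Ideal.Quotient.eq_zero_iff_mem, Ideal.mem_span_singleton]
  constructor
  · rintro ⟨q, hq⟩
    have h : (C c - X * q) * f = 0 := by ring_nf; linear_combination hq
    rcases mul_eq_zero.1 h with h' | h'
    · have := congrArg (fun g => Polynomial.coeff g 0) h'
      simpa using this
    · exact absurd h' hf
  · rintro rfl; simp

end Aux

/-- Let `f(y) ∈ ℤ_p[y]` be a monic polynomial with `f(y) ≡ y^{deg f} (mod p)`
and `f(0) ≠ 0`, and let `R = ℤ_p[y]/(y·f(y))` with `ȳ` the image of `y`.  Then: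
(a) the annihilator in `R` of the principal ideal `(ȳ)` is the principal ideal
`(f(ȳ))`; and (b) every nonzero ideal of `R` contained in `(f(ȳ))` equals
`p^i·(f(ȳ))` for some integer `i ≥ 0`. -/
theorem annihilator_of_yBar_and_subideals
    (p : ℕ) [Fact p.Prime] (f : Polynomial ℤ_[p]) (hmonic : f.Monic)
    (hmod : ∀ i < f.natDegree, (p : ℤ_[p]) ∣ f.coeff i)
    (h0 : f.coeff 0 ≠ 0) :
    ((Ideal.span {yBar p f}).annihilator = Ideal.span {fBar p f})
    ∧ (∀ a : Ideal (PadicQuotYF p f), a ≠ ⊥ → a ≤ Ideal.span {fBar p f} →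
        ∃ i : ℕ, a = Ideal.span {((p : PadicQuotYF p f) ^ i) * fBar p f}) := by
  have hf : f ≠ 0 := hmonic.ne_zero
  set J : Ideal (Polynomial ℤ_[p]) := Ideal.span {X * f} with hJ
  set mk := Ideal.Quotient.mk J with hmk
  have hpow : ∀ c : ℤ_[p], ∀ i : ℕ,
      ((p : PadicQuotYF p f) ^ i) * mk (C c * f) = mk (C ((p:ℤ_[p])^i * c) * f) := by
    intro c i
    have h1 : (p : PadicQuotYF p f) = mk (C (p : ℤ_[p])) := by push_cast; rfl
    rw [h1, ← map_pow, ← map_mul]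
    exact congrArg mk (by rw [C_mul, C_pow]; ring)
  constructor
  · ext x
    have hann : x ∈ (Ideal.span {yBar p f}).annihilator ↔ x • yBar p f = 0 :=
      Submodule.mem_annihilator_span_singleton _ _
    rw [hann]
    obtain ⟨g, rfl⟩ := Ideal.Quotient.mk_surjective x
    have h2 : (mk g) • yBar p f = mk (g * X) := (map_mul mk g X).symm
    rw [h2, Ideal.Quotient.eq_zero_iff_mem, Ideal.mem_span_singleton,
      Ideal.mem_span_singleton]
    constructor
    · intro h
      have hXdvd : X * f ∣ X * g := by rwa [mul_comm g X] at h
      have : f ∣ g := (mul_dvd_mul_iff_left (X_ne_zero (R := ℤ_[p]))).1 hXdvd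
      obtain ⟨q, rfl⟩ := this
      refine ⟨mk q, ?_⟩
      show mk (f * q) = mk f * mk q
      rw [map_mul]
    · rintro ⟨r, hr⟩
      obtain ⟨q, rfl⟩ := Ideal.Quotient.mk_surjective r
      have h7 : mk g = mk (f * q) := by rw [map_mul]; exact hr
      have h8 : X * f ∣ g - f * q := by
        rw [← Ideal.mem_span_singleton, ← hJ, ← Ideal.Quotient.eq_zero_iff_mem,
          map_sub, h7, sub_self]
      obtain ⟨w, hw⟩ := h8
      exact ⟨q + w * X, by linear_combination X * hw⟩
  · intro a ha hle
    set S : Ideal ℤ_[p] :=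
      { carrier := {c : ℤ_[p] | mk (C c * f) ∈ a}
        add_mem' := by
          intro c d hc hd
          simpa [map_add, add_mul] using a.add_mem hc hd
        zero_mem' := by simp
        smul_mem' := by
          intro d c hc
          have h3 : mk (C (d * c) * f) = mk (C d) * mk (C c * f) := by
            rw [← map_mul]; exact congrArg mk (by rw [C_mul]; ring)
          simpa [smul_eq_mul, h3, mul_assoc] using a.mul_mem_left (mk (C d)) hc } with hS
    have hSne : S ≠ ⊥ := by
      obtain ⟨x, hxa, hx0⟩ := Submodule.exists_mem_ne_zero_of_ne_bot ha
      obtain ⟨c, rfl⟩ := (aux_mem_span_fbar p f x).1 (hle hxa)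
      intro hbot
      have hcS : c ∈ S := hxa
      rw [hbot, Ideal.mem_bot] at hcS
      exact hx0 (by rw [hcS]; simp)
    obtain ⟨i, hSi⟩ := PadicInt.ideal_eq_span_pow_p hSne
    refine ⟨i, le_antisymm ?_ ?_⟩
    · intro x hxa
      obtain ⟨c, rfl⟩ := (aux_mem_span_fbar p f x).1 (hle hxa)
      have hcS : c ∈ S := hxa
      rw [hSi, Ideal.mem_span_singleton] at hcS
      obtain ⟨d, rfl⟩ := hcS
      rw [Ideal.mem_span_singleton]
      refine ⟨mk (C d), ?_⟩
      have h4 : ((p : PadicQuotYF p f) ^ i * fBar p f) * mk (C d)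
          = (p : PadicQuotYF p f) ^ i * mk (C d * f) := by
        show _ * mk f * _ = _
        rw [mul_assoc, ← map_mul, mul_comm f (C d)]
      rw [h4, hpow]
    · rw [Ideal.span_le, Set.singleton_subset_iff]
      have hpi : ((p:ℤ_[p])^i) ∈ S := by rw [hSi]; exact Ideal.mem_span_singleton_self _
      have h5 : ((p : PadicQuotYF p f) ^ i) * fBar p f = mk (C ((p:ℤ_[p])^i) * f) := by
        have h6 := hpow 1 i
        rw [C_1, one_mul, mul_one] at h6
        exact h6
      rw [h5]
      exact hpi
end

section
/- Assume ν_{r−1} is a homomorphism. Define ν'(σ) = [[χ₁(σ), 0], [χ₁(σ)·a₂₁^{(1)}(σ), χ₂(σ)]]; with the convention a₁₂^{(0)} = 0, for 1 ≤ i ≤ r−2 define M'_i(σ) = [[χ₁(σ)·a₁₁^{(i)}(σ), χ₂(σ)·a₁₂^{(i−1)}(σ)], [χ₁(σ)·a₂₁^{(i+1)}(σ), χ₂(σ)·a₂₂^{(i)}(σ)]]; and for a function a : G → A define M'_{r−1}(σ) = [[χ₁(σ)·a₁₁^{(r−1)}(σ), χ₂(σ)·a₁₂^{(r−2)}(σ)],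 [χ₁(σ)·a(σ), χ₂(σ)·a₂₂^{(r−1)}(σ)]]. For 1 ≤ i ≤ r−1 let ν'_i : G → M₂(A[ε]/(ε^{i+1})) be ν'_i(σ) = ν'(σ) + Σ_{j=1}^{i} M'_j(σ)·ε^j. Then: (a) ν'_i is a homomorphism for every 1 ≤ i ≤ r−2; and (b) ν'_{r−1} is a homomorphism if and only if for all σ, τ ∈ G: a(στ) = a(σ) + χ₁(σ)^{−1}χ₂(σ)·a(τ) + Σ_{j=1}^{r−1} [ a₂₁^{(j)}(σ)·a₁₁^{(r−j)}(τ) + χ₁(σ)^{−1}χ₂(σ)·a₂₂^{(j)}(σ)·a₂₁^{(r−j)}(τ) ]. -/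
open Polynomial

/-- The ring `A[ε]/(ε^{i+1})`, as a quotient of the polynomial ring `A[ε]`. -/
abbrev TruncPoly (A : Type*) [CommRing A] (i : ℕ) :=
  Polynomial A ⧸ Ideal.span {(X : Polynomial A) ^ (i + 1)}

/-- The canonical ring map `A → A[ε]/(ε^{i+1})`. -/
noncomputable def truncC (A : Type*) [CommRing A] (i : ℕ) : A →+* TruncPoly A i :=
  (Ideal.Quotient.mk (Ideal.span {(X : Polynomial A) ^ (i + 1)})).comp Polynomial.C

/-- The element `ε ∈ A[ε]/(ε^{i+1})`. -/
noncomputable def truncEps (A : Type*) [CommRing A] (i : ℕ) : TruncPoly A i :=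
  Ideal.Quotient.mk (Ideal.span {(X : Polynomial A) ^ (i + 1)}) X

section

variable {G : Type*} [Group G] {A : Type*} [CommRing A]

/-- The matrix `M_i(σ) = [[χ₁(σ)·a₁₁^{(i)}(σ), χ₂(σ)·a₁₂^{(i)}(σ)],
[χ₁(σ)·a₂₁^{(i)}(σ), χ₂(σ)·a₂₂^{(i)}(σ)]]`. -/
def masseyMat (χ₁ χ₂ : G →* Aˣ) (a11 a12 a21 a22 : ℕ → G → A) (i : ℕ) (σ : G) :
    Matrix (Fin 2) (Fin 2) A :=
  !![(χ₁ σ : A) * a11 i σ, (χ₂ σ : A) * a12 i σ;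
     (χ₁ σ : A) * a21 i σ, (χ₂ σ : A) * a22 i σ]

/-- The diagonal representation `ν(σ) = diag(χ₁(σ), χ₂(σ))`. -/
def diagMat (χ₁ χ₂ : G →* Aˣ) (σ : G) : Matrix (Fin 2) (Fin 2) A :=
  !![(χ₁ σ : A), 0; 0, (χ₂ σ : A)]

/-- `ν_i : G → M₂(A[ε]/(ε^{i+1}))`, `ν_i(σ) = ν(σ) + Σ_{j=1}^{i} M_j(σ)·ε^j`. -/
noncomputable def nuTrunc (χ₁ χ₂ : G →* Aˣ) (a11 a12 a21 a22 : ℕ → G → A) (i : ℕ) (σ : G) :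
    Matrix (Fin 2) (Fin 2) (TruncPoly A i) :=
  (diagMat χ₁ χ₂ σ).map (truncC A i)
    + ∑ j ∈ Finset.Icc 1 i,
        (truncEps A i) ^ j • (masseyMat χ₁ χ₂ a11 a12 a21 a22 j σ).map (truncC A i)

/-- The lower-triangular residual representation
`ν'(σ) = [[χ₁(σ), 0], [χ₁(σ)·a₂₁^{(1)}(σ), χ₂(σ)]]`. -/
def lowerMat (χ₁ χ₂ : G →* Aˣ) (a21 : ℕ → G → A) (σ : G) : Matrix (Fin 2) (Fin 2) A :=
  !![(χ₁ σ : A), 0; (χ₁ σ : A) * a21 1 σ, (χ₂ σ : A)]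

/-- The matrices `M'_i(σ)`: for `i ≠ r−1`,
`M'_i(σ) = [[χ₁(σ)·a₁₁^{(i)}(σ), χ₂(σ)·a₁₂^{(i−1)}(σ)],
[χ₁(σ)·a₂₁^{(i+1)}(σ), χ₂(σ)·a₂₂^{(i)}(σ)]]` (with the convention
`a₁₂^{(0)} = 0`), and for `i = r−1` the `(2,1)`-entry is `χ₁(σ)·a(σ)`. -/
def masseyMat' (r : ℕ) (χ₁ χ₂ : G →* Aˣ) (a11 a12 a21 a22 : ℕ → G → A) (a : G → A)
    (i : ℕ) (σ : G) : Matrix (Fin 2) (Fin 2) A :=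
  if i = r - 1 then
    !![(χ₁ σ : A) * a11 (r - 1) σ, (χ₂ σ : A) * a12 (r - 2) σ;
       (χ₁ σ : A) * a σ,           (χ₂ σ : A) * a22 (r - 1) σ]
  else
    !![(χ₁ σ : A) * a11 i σ,       (χ₂ σ : A) * a12 (i - 1) σ;
       (χ₁ σ : A) * a21 (i + 1) σ, (χ₂ σ : A) * a22 i σ]

/-- `ν'_i : G → M₂(A[ε]/(ε^{i+1}))`, `ν'_i(σ) = ν'(σ) + Σ_{j=1}^{i} M'_j(σ)·ε^j`. -/
noncomputable def nuTrunc' (r : ℕ) (χ₁ χ₂ : G →* Aˣ) (a11 a12 a21 a22 : ℕ → G → A)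
    (a : G → A) (i : ℕ) (σ : G) : Matrix (Fin 2) (Fin 2) (TruncPoly A i) :=
  (lowerMat χ₁ χ₂ a21 σ).map (truncC A i)
    + ∑ j ∈ Finset.Icc 1 i,
        (truncEps A i) ^ j • (masseyMat' r χ₁ χ₂ a11 a12 a21 a22 a j σ).map (truncC A i)

end

namespace TruncAux

open Polynomial Finset

variable {A : Type*} [CommRing A]

noncomputable def tp (A : Type*) [CommRing A] (i : ℕ) (c : ℕ → A) : TruncPoly A i :=
  Ideal.Quotient.mk _ (∑ k ∈ Finset.range (i + 1), Polynomial.C (c k) * X ^ k)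

lemma coeff_sum_C_X (i : ℕ) (c : ℕ → A) (n : ℕ) :
    (∑ k ∈ Finset.range (i + 1), Polynomial.C (c k) * X ^ k).coeff n
      = if n ≤ i then c n else 0 := by
  rw [Polynomial.finset_sum_coeff]
  simp only [Polynomial.coeff_C_mul, Polynomial.coeff_X_pow, mul_ite, mul_one, mul_zero]
  simp [Finset.sum_ite_eq, Nat.lt_succ_iff]

lemma tp_eq_tp_iff (i : ℕ) (c d : ℕ → A) :
    tp A i c = tp A i d ↔ ∀ k ≤ i, c k = d k := by
  unfold tp
  rw [Ideal.Quotient.eq, Ideal.mem_span_singleton]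
  rw [Polynomial.X_pow_dvd_iff]
  constructor
  · intro h k hk
    have := h k (by omega)
    rw [Polynomial.coeff_sub, coeff_sum_C_X, coeff_sum_C_X, if_pos hk, if_pos hk,
      sub_eq_zero] at this
    exact this
  · intro h k hk
    rw [Polynomial.coeff_sub, coeff_sum_C_X, coeff_sum_C_X]
    have hk' : k ≤ i := by omega
    rw [if_pos hk', if_pos hk', h k hk', sub_self]

lemma tp_mul (i : ℕ) (c d : ℕ → A) :
    tp A i c * tp A i d
      = tp A i (fun k => ∑ p ∈ Finset.range (k + 1), c p * d (k - p)) := by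
  unfold tp
  rw [← map_mul]
  rw [Ideal.Quotient.eq, Ideal.mem_span_singleton, Polynomial.X_pow_dvd_iff]
  intro n hn
  have hn' : n ≤ i := by omega
  rw [Polynomial.coeff_sub, Polynomial.coeff_mul, coeff_sum_C_X, if_pos hn',
    Finset.Nat.sum_antidiagonal_eq_sum_range_succ_mk, sub_eq_zero]
  refine Finset.sum_congr rfl fun p hp => ?_
  rw [Finset.mem_range] at hp
  rw [coeff_sum_C_X, coeff_sum_C_X, if_pos (by omega), if_pos (by omega)]

lemma tp_add (i : ℕ) (c d : ℕ → A) :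
    tp A i c + tp A i d = tp A i (fun k => c k + d k) := by
  unfold tp
  rw [← map_add]
  congr 1
  rw [← Finset.sum_add_distrib]
  exact Finset.sum_congr rfl fun k _ => by rw [map_add, add_mul]

lemma entry (i : ℕ) (P : ℕ → Matrix (Fin 2) (Fin 2) A) (a b : Fin 2) :
    ((P 0).map (truncC A i)
        + ∑ j ∈ Finset.Icc 1 i, (truncEps A i) ^ j • (P j).map (truncC A i)) a b
      = tp A i (fun k => P k a b) := by
  have lhs : ((P 0).map (truncC A i)
        + ∑ j ∈ Finset.Icc 1 i, (truncEps A i) ^ j • (P j).map (truncC A i)) a b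
      = truncC A i (P 0 a b)
        + ∑ j ∈ Finset.Icc 1 i, (truncEps A i) ^ j * truncC A i (P j a b) := by
    simp only [Matrix.add_apply, Matrix.sum_apply, Matrix.smul_apply, Matrix.map_apply,
      smul_eq_mul]
  rw [lhs]
  have key : ∀ k, truncC A i (P k a b) * (truncEps A i) ^ k
      = Ideal.Quotient.mk _ (Polynomial.C (P k a b) * X ^ k) := by
    intro k
    rw [truncC, truncEps, RingHom.comp_apply, ← map_pow, ← map_mul]
  unfold tp
  rw [map_sum]
  rw [Finset.sum_range_succ']
  rw [← Finset.Ico_add_one_right_eq_Icc, Finset.sum_Ico_eq_sum_range]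
  simp only [Nat.add_sub_cancel]
  rw [← key 0]
  simp only [pow_zero, mul_one]
  rw [add_comm]
  congr 1
  exact Finset.sum_congr rfl fun j _ => by rw [← key, mul_comm, add_comm 1 j]

lemma ent_iff (P : Matrix (Fin 2) (Fin 2) A) (Q R : ℕ → Matrix (Fin 2) (Fin 2) A) (k : ℕ) :
    P = ∑ p ∈ Finset.range (k + 1), Q p * R (k - p) ↔
      ∀ a b, P a b = ∑ p ∈ Finset.range (k + 1),
        (Q p a 0 * R (k - p) 0 b + Q p a 1 * R (k - p) 1 b) := by
  rw [← Matrix.ext_iff]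
  simp_rw [Matrix.sum_apply, Matrix.mul_apply, Fin.sum_univ_two]

lemma key (i : ℕ) (P Q R : ℕ → Matrix (Fin 2) (Fin 2) A) :
    ((P 0).map (truncC A i)
        + ∑ j ∈ Finset.Icc 1 i, (truncEps A i) ^ j • (P j).map (truncC A i))
      = ((Q 0).map (truncC A i)
          + ∑ j ∈ Finset.Icc 1 i, (truncEps A i) ^ j • (Q j).map (truncC A i))
        * ((R 0).map (truncC A i)
          + ∑ j ∈ Finset.Icc 1 i, (truncEps A i) ^ j • (R j).map (truncC A i))
    ↔ ∀ k ≤ i, P k = ∑ p ∈ Finset.range (k + 1), Q p * R (k - p) := by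
  have hR : ∀ a b : Fin 2,
      (((Q 0).map (truncC A i)
          + ∑ j ∈ Finset.Icc 1 i, (truncEps A i) ^ j • (Q j).map (truncC A i))
        * ((R 0).map (truncC A i)
          + ∑ j ∈ Finset.Icc 1 i, (truncEps A i) ^ j • (R j).map (truncC A i))) a b
      = tp A i (fun k => (∑ p ∈ Finset.range (k + 1), Q p * R (k - p)) a b) := by
    intro a b
    rw [Matrix.mul_apply, Fin.sum_univ_two, entry, entry, entry, entry, tp_mul, tp_mul, tp_add]
    congr 1
    funext k
    rw [Matrix.sum_apply, ← Finset.sum_add_distrib]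
    exact Finset.sum_congr rfl fun p _ => by rw [Matrix.mul_apply, Fin.sum_univ_two]
  constructor
  · intro h k hk
    ext a b
    have h2 : tp A i (fun k => P k a b)
        = tp A i (fun k => (∑ p ∈ Finset.range (k + 1), Q p * R (k - p)) a b) := by
      rw [← entry, ← hR a b, h]
    exact (tp_eq_tp_iff _ _ _).mp h2 k hk
  · intro h
    ext a b
    rw [entry, hR a b]
    rw [tp_eq_tp_iff]
    intro k hk
    rw [h k hk]

end TruncAux

namespace TruncAux

section BLayer

variable {G : Type*} [Group G] {A : Type*} [CommRing A]

/-- `if k = 0 then 1 else g k σ` -/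
def F1 (g : ℕ → G → A) : ℕ → G → A := fun k σ => if k = 0 then 1 else g k σ

/-- `if k = 0 then 0 else g k σ` -/
def F0 (g : ℕ → G → A) : ℕ → G → A := fun k σ => if k = 0 then 0 else g k σ

def G21 (r : ℕ) (a21 : ℕ → G → A) (a : G → A) : ℕ → G → A :=
  fun k σ => if k = r - 1 then a σ else a21 (k + 1) σ

def Bnu (χ₁ χ₂ : G →* Aˣ) (a11 a12 a21 a22 : ℕ → G → A) : ℕ → G → Matrix (Fin 2) (Fin 2) A :=
  fun k σ => if k = 0 then diagMat χ₁ χ₂ σ else masseyMat χ₁ χ₂ a11 a12 a21 a22 k σ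

def Bnu' (r : ℕ) (χ₁ χ₂ : G →* Aˣ) (a11 a12 a21 a22 : ℕ → G → A) (a : G → A) :
    ℕ → G → Matrix (Fin 2) (Fin 2) A :=
  fun k σ => if k = 0 then lowerMat χ₁ χ₂ a21 σ else masseyMat' r χ₁ χ₂ a11 a12 a21 a22 a k σ

variable (χ₁ χ₂ : G →* Aˣ) (a11 a12 a21 a22 : ℕ → G → A) (a : G → A) (r : ℕ)

lemma nuTrunc_eq_form (i : ℕ) (σ : G) :
    nuTrunc χ₁ χ₂ a11 a12 a21 a22 i σ
      = (Bnu χ₁ χ₂ a11 a12 a21 a22 0 σ).map (truncC A i)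
        + ∑ j ∈ Finset.Icc 1 i,
            (truncEps A i) ^ j • (Bnu χ₁ χ₂ a11 a12 a21 a22 j σ).map (truncC A i) := by
  unfold nuTrunc Bnu
  congr 1
  refine Finset.sum_congr rfl fun j hj => ?_
  rw [Finset.mem_Icc] at hj
  rw [if_neg (by omega)]

lemma nuTrunc'_eq_form (i : ℕ) (σ : G) :
    nuTrunc' r χ₁ χ₂ a11 a12 a21 a22 a i σ
      = (Bnu' r χ₁ χ₂ a11 a12 a21 a22 a 0 σ).map (truncC A i)
        + ∑ j ∈ Finset.Icc 1 i,
            (truncEps A i) ^ j • (Bnu' r χ₁ χ₂ a11 a12 a21 a22 a j σ).map (truncC A i) := by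
  unfold nuTrunc' Bnu'
  congr 1
  refine Finset.sum_congr rfl fun j hj => ?_
  rw [Finset.mem_Icc] at hj
  rw [if_neg (by omega)]

lemma Bnu_entries (h120 : ∀ σ : G, a12 0 σ = 0) (k : ℕ) (σ : G) :
    Bnu χ₁ χ₂ a11 a12 a21 a22 k σ
      = !![(χ₁ σ : A) * F1 a11 k σ, (χ₂ σ : A) * a12 k σ;
           (χ₁ σ : A) * F0 a21 k σ, (χ₂ σ : A) * F1 a22 k σ] := by
  unfold Bnu F1 F0
  rcases eq_or_ne k 0 with rfl | hk
  · simp [diagMat, h120]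
  · simp [hk, masseyMat]

lemma Bnu'_entries (hr : 2 ≤ r) (h120 : ∀ σ : G, a12 0 σ = 0) (k : ℕ) (σ : G) :
    Bnu' r χ₁ χ₂ a11 a12 a21 a22 a k σ
      = !![(χ₁ σ : A) * F1 a11 k σ, (χ₂ σ : A) * a12 (k - 1) σ;
           (χ₁ σ : A) * G21 r a21 a k σ, (χ₂ σ : A) * F1 a22 k σ] := by
  unfold Bnu' F1 G21
  rcases eq_or_ne k 0 with rfl | hk
  · rw [if_pos rfl, if_pos rfl, if_pos rfl, if_neg (by omega)]
    simp [lowerMat, h120]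
  · unfold masseyMat'
    simp only [if_neg hk]
    rcases eq_or_ne k (r - 1) with rfl | hk'
    · rw [if_pos rfl, show r - 1 - 1 = r - 2 from by omega, if_pos rfl]
    · rw [if_neg hk', if_neg hk']

end BLayer

end TruncAux

namespace TruncAux

section Shifts

variable {A : Type*} [CommRing A]

lemma sum_shift₁ (u v : ℕ → A) (hu : u 0 = 0) (hv : v 0 = 0) (k : ℕ) :
    ∑ p ∈ Finset.range (k + 1), u (p - 1) * v (k - p + 1)
      = ∑ p ∈ Finset.range (k + 1), u p * v (k - p) := by
  rw [Finset.sum_range_succ', Finset.sum_range_succ]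
  simp only [Nat.sub_self, Nat.zero_sub, hu, hv, zero_mul, mul_zero, add_zero]
  refine Finset.sum_congr rfl fun p hp => ?_
  rw [Finset.mem_range] at hp
  rw [show p + 1 - 1 = p from by omega, show k - (p + 1) + 1 = k - p from by omega]

lemma sum_shift₂ (u v : ℕ → A) (hu : u 0 = 0) (k : ℕ) :
    ∑ p ∈ Finset.range (k + 2), u p * v (k + 1 - p)
      = ∑ p ∈ Finset.range (k + 1), u (p + 1) * v (k - p) := by
  rw [Finset.sum_range_succ']
  simp only [Nat.sub_zero, hu, zero_mul, add_zero]
  refine Finset.sum_congr rfl fun p hp => ?_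
  rw [show k + 1 - (p + 1) = k - p from by omega]

lemma sum_shift₃ (u v : ℕ → A) (hv : v 0 = 0) (k : ℕ) :
    ∑ p ∈ Finset.range (k + 2), u p * v (k + 1 - p)
      = ∑ p ∈ Finset.range (k + 1), u p * v (k - p + 1) := by
  rw [Finset.sum_range_succ]
  simp only [Nat.sub_self, hv, mul_zero, add_zero]
  refine Finset.sum_congr rfl fun p hp => ?_
  rw [Finset.mem_range] at hp
  rw [show k + 1 - p = k - p + 1 from by omega]

lemma sum_top (u v : ℕ → A) (hv : v 0 = 0) (m : ℕ) :
    ∑ p ∈ Finset.range (m + 2), u p * v (m - p)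
      = ∑ p ∈ Finset.range (m + 1), u p * v (m - p) := by
  rw [Finset.sum_range_succ, show m - (m + 1) = 0 from by omega, hv, mul_zero, add_zero]

lemma sum_shift₄ (u v : ℕ → A) (hu : u 0 = 0) (m : ℕ) :
    ∑ p ∈ Finset.range (m + 2), u (p - 1) * v (m + 1 - p)
      = ∑ p ∈ Finset.range (m + 1), u p * v (m - p) := by
  rw [Finset.sum_range_succ']
  simp only [Nat.zero_sub, hu, zero_mul, add_zero]
  refine Finset.sum_congr rfl fun p hp => ?_
  rw [show p + 1 - 1 = p from by omega, show m + 1 - (p + 1) = m - p from by omega]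

lemma sum_shift₅ (u v : ℕ → A) (hu : u 0 = 0) (hv : v 0 = 0) (k : ℕ) :
    ∑ p ∈ Finset.range (k + 1), u (p + 1) * v (k - p - 1)
      = ∑ p ∈ Finset.range (k + 1), u p * v (k - p) := by
  rw [Finset.sum_range_succ, Finset.sum_range_succ']
  simp only [Nat.sub_self, Nat.zero_sub, hu, hv, zero_mul, mul_zero, add_zero]
  refine Finset.sum_congr rfl fun p hp => ?_
  rw [Finset.mem_range] at hp
  rw [show k - (p + 1) = k - p - 1 from by omega]

end Shifts

end TruncAux

set_option maxHeartbeats 1000000 in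
open TruncAux in
/-- Assume `ν_{r−1}` is a homomorphism.  Then: (a) `ν'_i` is a homomorphism for
every `1 ≤ i ≤ r−2`; and (b) `ν'_{r−1}` is a homomorphism if and only if for all
`σ, τ ∈ G`:
`a(στ) = a(σ) + χ₁(σ)⁻¹χ₂(σ)·a(τ)
  + Σ_{j=1}^{r−1} [a₂₁^{(j)}(σ)·a₁₁^{(r−j)}(τ) + χ₁(σ)⁻¹χ₂(σ)·a₂₂^{(j)}(σ)·a₂₁^{(r−j)}(τ)]`. -/
theorem nuTrunc'_hom_iff
    (G : Type*) [Group G] (A : Type*) [CommRing A] (r : ℕ) (hr : 2 ≤ r)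
    (χ₁ χ₂ : G →* Aˣ) (a11 a12 a21 a22 : ℕ → G → A) (a : G → A)
    (h120 : ∀ σ : G, a12 0 σ = 0)
    (hprev : ∀ σ τ : G,
      nuTrunc χ₁ χ₂ a11 a12 a21 a22 (r - 1) (σ * τ)
        = nuTrunc χ₁ χ₂ a11 a12 a21 a22 (r - 1) σ
            * nuTrunc χ₁ χ₂ a11 a12 a21 a22 (r - 1) τ) :
    (∀ i : ℕ, 1 ≤ i → i ≤ r - 2 → ∀ σ τ : G,
      nuTrunc' r χ₁ χ₂ a11 a12 a21 a22 a i (σ * τ)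
        = nuTrunc' r χ₁ χ₂ a11 a12 a21 a22 a i σ
            * nuTrunc' r χ₁ χ₂ a11 a12 a21 a22 a i τ)
    ∧ ((∀ σ τ : G,
          nuTrunc' r χ₁ χ₂ a11 a12 a21 a22 a (r - 1) (σ * τ)
            = nuTrunc' r χ₁ χ₂ a11 a12 a21 a22 a (r - 1) σ
                * nuTrunc' r χ₁ χ₂ a11 a12 a21 a22 a (r - 1) τ)
        ↔ (∀ σ τ : G,
            a (σ * τ)
              = a σ + (((χ₁ σ)⁻¹ : Aˣ) : A) * (χ₂ σ : A) * a τ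
                + ∑ j ∈ Finset.Icc 1 (r - 1),
                    (a21 j σ * a11 (r - j) τ
                      + (((χ₁ σ)⁻¹ : Aˣ) : A) * (χ₂ σ : A) * a22 j σ * a21 (r - j) τ))) := by
  have Hmat : ∀ σ τ : G, ∀ k ≤ r - 1,
      Bnu χ₁ χ₂ a11 a12 a21 a22 k (σ * τ)
        = ∑ p ∈ Finset.range (k + 1),
            Bnu χ₁ χ₂ a11 a12 a21 a22 p σ * Bnu χ₁ χ₂ a11 a12 a21 a22 (k - p) τ := by
    intro σ τ
    have h := hprev σ τ
    rw [nuTrunc_eq_form, nuTrunc_eq_form, nuTrunc_eq_form] at h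
    exact (TruncAux.key (r - 1) (fun j => Bnu χ₁ χ₂ a11 a12 a21 a22 j (σ * τ))
      (fun j => Bnu χ₁ χ₂ a11 a12 a21 a22 j σ)
      (fun j => Bnu χ₁ χ₂ a11 a12 a21 a22 j τ)).mp h
  have H11 : ∀ σ τ : G, ∀ k ≤ r - 1,
      (χ₁ σ : A) * (χ₁ τ : A) * F1 a11 k (σ * τ)
        = ∑ p ∈ Finset.range (k + 1),
            ((χ₁ σ : A) * F1 a11 p σ * ((χ₁ τ : A) * F1 a11 (k - p) τ)
              + (χ₂ σ : A) * a12 p σ * ((χ₁ τ : A) * F0 a21 (k - p) τ)) := by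
    intro σ τ k hk
    have h := (TruncAux.ent_iff (Bnu χ₁ χ₂ a11 a12 a21 a22 k (σ * τ))
      (fun p => Bnu χ₁ χ₂ a11 a12 a21 a22 p σ)
      (fun p => Bnu χ₁ χ₂ a11 a12 a21 a22 p τ) k).mp (Hmat σ τ k hk) 0 0
    simp only [Bnu_entries χ₁ χ₂ a11 a12 a21 a22 h120, Matrix.cons_val', Matrix.cons_val_zero,
      Matrix.cons_val_one, Matrix.head_cons, Matrix.head_fin_const, Matrix.empty_val',
      Matrix.cons_val_fin_one, map_mul, Units.val_mul] at h
    exact h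
  have H12 : ∀ σ τ : G, ∀ k ≤ r - 1,
      (χ₂ σ : A) * (χ₂ τ : A) * a12 k (σ * τ)
        = ∑ p ∈ Finset.range (k + 1),
            ((χ₁ σ : A) * F1 a11 p σ * ((χ₂ τ : A) * a12 (k - p) τ)
              + (χ₂ σ : A) * a12 p σ * ((χ₂ τ : A) * F1 a22 (k - p) τ)) := by
    intro σ τ k hk
    have h := (TruncAux.ent_iff (Bnu χ₁ χ₂ a11 a12 a21 a22 k (σ * τ))
      (fun p => Bnu χ₁ χ₂ a11 a12 a21 a22 p σ)
      (fun p => Bnu χ₁ χ₂ a11 a12 a21 a22 p τ) k).mp (Hmat σ τ k hk) 0 1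
    simp only [Bnu_entries χ₁ χ₂ a11 a12 a21 a22 h120, Matrix.cons_val', Matrix.cons_val_zero,
      Matrix.cons_val_one, Matrix.head_cons, Matrix.head_fin_const, Matrix.empty_val',
      Matrix.cons_val_fin_one, map_mul, Units.val_mul] at h
    exact h
  have H21 : ∀ σ τ : G, ∀ k ≤ r - 1,
      (χ₁ σ : A) * (χ₁ τ : A) * F0 a21 k (σ * τ)
        = ∑ p ∈ Finset.range (k + 1),
            ((χ₁ σ : A) * F0 a21 p σ * ((χ₁ τ : A) * F1 a11 (k - p) τ)
              + (χ₂ σ : A) * F1 a22 p σ * ((χ₁ τ : A) * F0 a21 (k - p) τ)) := by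
    intro σ τ k hk
    have h := (TruncAux.ent_iff (Bnu χ₁ χ₂ a11 a12 a21 a22 k (σ * τ))
      (fun p => Bnu χ₁ χ₂ a11 a12 a21 a22 p σ)
      (fun p => Bnu χ₁ χ₂ a11 a12 a21 a22 p τ) k).mp (Hmat σ τ k hk) 1 0
    simp only [Bnu_entries χ₁ χ₂ a11 a12 a21 a22 h120, Matrix.cons_val', Matrix.cons_val_zero,
      Matrix.cons_val_one, Matrix.head_cons, Matrix.head_fin_const, Matrix.empty_val',
      Matrix.cons_val_fin_one, map_mul, Units.val_mul] at h
    exact h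
  have H22 : ∀ σ τ : G, ∀ k ≤ r - 1,
      (χ₂ σ : A) * (χ₂ τ : A) * F1 a22 k (σ * τ)
        = ∑ p ∈ Finset.range (k + 1),
            ((χ₁ σ : A) * F0 a21 p σ * ((χ₂ τ : A) * a12 (k - p) τ)
              + (χ₂ σ : A) * F1 a22 p σ * ((χ₂ τ : A) * F1 a22 (k - p) τ)) := by
    intro σ τ k hk
    have h := (TruncAux.ent_iff (Bnu χ₁ χ₂ a11 a12 a21 a22 k (σ * τ))
      (fun p => Bnu χ₁ χ₂ a11 a12 a21 a22 p σ)
      (fun p => Bnu χ₁ χ₂ a11 a12 a21 a22 p τ) k).mp (Hmat σ τ k hk) 1 1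
    simp only [Bnu_entries χ₁ χ₂ a11 a12 a21 a22 h120, Matrix.cons_val', Matrix.cons_val_zero,
      Matrix.cons_val_one, Matrix.head_cons, Matrix.head_fin_const, Matrix.empty_val',
      Matrix.cons_val_fin_one, map_mul, Units.val_mul] at h
    exact h
  have C00 : ∀ σ τ : G, ∀ k ≤ r - 1,
      (χ₁ σ : A) * (χ₁ τ : A) * F1 a11 k (σ * τ)
        = ∑ p ∈ Finset.range (k + 1),
            ((χ₁ σ : A) * F1 a11 p σ * ((χ₁ τ : A) * F1 a11 (k - p) τ)
              + (χ₂ σ : A) * a12 (p - 1) σ * ((χ₁ τ : A) * G21 r a21 a (k - p) τ)) := by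
    intro σ τ k hk
    rw [H11 σ τ k hk, Finset.sum_add_distrib, Finset.sum_add_distrib]
    congr 1
    have hs := TruncAux.sum_shift₁ (fun p => (χ₂ σ : A) * a12 p σ)
      (fun q => (χ₁ τ : A) * F0 a21 q τ) (by simp [h120]) (by simp [TruncAux.F0]) k
    beta_reduce at hs
    rw [← hs]
    refine Finset.sum_congr rfl fun p hp => ?_
    rw [Finset.mem_range] at hp
    by_cases hq : k - p = r - 1
    · have hp0 : p = 0 := by omega
      subst hp0
      simp [h120]
    · rw [show G21 r a21 a (k - p) τ = F0 a21 (k - p + 1) τ from by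
        unfold TruncAux.G21 TruncAux.F0; rw [if_neg hq, if_neg (by omega)]]
  have C01 : ∀ σ τ : G, ∀ k ≤ r - 1,
      (χ₂ σ : A) * (χ₂ τ : A) * a12 (k - 1) (σ * τ)
        = ∑ p ∈ Finset.range (k + 1),
            ((χ₁ σ : A) * F1 a11 p σ * ((χ₂ τ : A) * a12 (k - p - 1) τ)
              + (χ₂ σ : A) * a12 (p - 1) σ * ((χ₂ τ : A) * F1 a22 (k - p) τ)) := by
    intro σ τ k hk
    rcases k with _ | m
    · simp [h120, TruncAux.F1]
    · rw [show m + 1 - 1 = m from by omega]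
      rw [H12 σ τ m (by omega), Finset.sum_add_distrib, Finset.sum_add_distrib]
      congr 1
      · have hs := TruncAux.sum_top (fun p => (χ₁ σ : A) * F1 a11 p σ)
          (fun q => (χ₂ τ : A) * a12 q τ) (by simp [h120]) m
        beta_reduce at hs
        rw [← hs]
        refine Finset.sum_congr rfl fun p hp => ?_
        rw [show m + 1 - p - 1 = m - p from by omega]
      · have hs := TruncAux.sum_shift₄ (fun p => (χ₂ σ : A) * a12 p σ)
          (fun q => (χ₂ τ : A) * F1 a22 q τ) (by simp [h120]) m
        beta_reduce at hs
        rw [← hs]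
  have C11 : ∀ σ τ : G, ∀ k ≤ r - 1,
      (χ₂ σ : A) * (χ₂ τ : A) * F1 a22 k (σ * τ)
        = ∑ p ∈ Finset.range (k + 1),
            ((χ₁ σ : A) * G21 r a21 a p σ * ((χ₂ τ : A) * a12 (k - p - 1) τ)
              + (χ₂ σ : A) * F1 a22 p σ * ((χ₂ τ : A) * F1 a22 (k - p) τ)) := by
    intro σ τ k hk
    rw [H22 σ τ k hk, Finset.sum_add_distrib, Finset.sum_add_distrib]
    congr 1
    have hs := TruncAux.sum_shift₅ (fun p => (χ₁ σ : A) * F0 a21 p σ)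
      (fun q => (χ₂ τ : A) * a12 q τ) (by simp [TruncAux.F0]) (by simp [h120]) k
    beta_reduce at hs
    rw [← hs]
    refine Finset.sum_congr rfl fun p hp => ?_
    rw [Finset.mem_range] at hp
    by_cases hq : p = r - 1
    · have h0 : k - p - 1 = 0 := by omega
      rw [h0]
      simp [h120]
    · rw [show F0 a21 (p + 1) σ = G21 r a21 a p σ from by
        unfold TruncAux.G21 TruncAux.F0; rw [if_neg hq, if_neg (by omega)]]
  have C10 : ∀ σ τ : G, ∀ k ≤ r - 2,
      (χ₁ σ : A) * (χ₁ τ : A) * G21 r a21 a k (σ * τ)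
        = ∑ p ∈ Finset.range (k + 1),
            ((χ₁ σ : A) * G21 r a21 a p σ * ((χ₁ τ : A) * F1 a11 (k - p) τ)
              + (χ₂ σ : A) * F1 a22 p σ * ((χ₁ τ : A) * G21 r a21 a (k - p) τ)) := by
    intro σ τ k hk
    have hk1 : ¬ k = r - 1 := by omega
    rw [show G21 r a21 a k (σ * τ) = F0 a21 (k + 1) (σ * τ) from by
      unfold TruncAux.G21 TruncAux.F0; rw [if_neg hk1, if_neg (by omega)]]
    rw [H21 σ τ (k + 1) (by omega), Finset.sum_add_distrib, Finset.sum_add_distrib]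
    have e : k + 1 + 1 = k + 2 := by omega
    rw [e]
    congr 1
    · have hs := TruncAux.sum_shift₂ (fun p => (χ₁ σ : A) * F0 a21 p σ)
        (fun q => (χ₁ τ : A) * F1 a11 q τ) (by simp [TruncAux.F0]) k
      beta_reduce at hs
      rw [hs]
      refine Finset.sum_congr rfl fun p hp => ?_
      rw [Finset.mem_range] at hp
      rw [show F0 a21 (p + 1) σ = G21 r a21 a p σ from by
        unfold TruncAux.G21 TruncAux.F0; rw [if_neg (by omega : ¬ p = r - 1), if_neg (by omega)]]
    · have hs := TruncAux.sum_shift₃ (fun p => (χ₂ σ : A) * F1 a22 p σ)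
        (fun q => (χ₁ τ : A) * F0 a21 q τ) (by simp [TruncAux.F0]) k
      beta_reduce at hs
      rw [hs]
      refine Finset.sum_congr rfl fun p hp => ?_
      rw [Finset.mem_range] at hp
      rw [show F0 a21 (k - p + 1) τ = G21 r a21 a (k - p) τ from by
        unfold TruncAux.G21 TruncAux.F0; rw [if_neg (by omega : ¬ k - p = r - 1), if_neg (by omega)]]
  have Emat : ∀ σ τ : G, ∀ k ≤ r - 2,
      Bnu' r χ₁ χ₂ a11 a12 a21 a22 a k (σ * τ)
        = ∑ p ∈ Finset.range (k + 1),
            Bnu' r χ₁ χ₂ a11 a12 a21 a22 a p σ * Bnu' r χ₁ χ₂ a11 a12 a21 a22 a (k - p) τ := by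
    intro σ τ k hk
    refine (TruncAux.ent_iff (Bnu' r χ₁ χ₂ a11 a12 a21 a22 a k (σ * τ))
      (fun p => Bnu' r χ₁ χ₂ a11 a12 a21 a22 a p σ)
      (fun p => Bnu' r χ₁ χ₂ a11 a12 a21 a22 a p τ) k).mpr ?_
    intro i j
    fin_cases i <;> fin_cases j <;>
      simp only [Bnu'_entries χ₁ χ₂ a11 a12 a21 a22 a r hr h120, Matrix.cons_val',
        Matrix.cons_val_zero, Matrix.cons_val_one, Matrix.head_cons, Matrix.head_fin_const,
        Matrix.empty_val', Matrix.cons_val_fin_one, map_mul, Units.val_mul]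
    · exact C00 σ τ k (by omega)
    · exact C01 σ τ k (by omega)
    · exact C10 σ τ k (by omega)
    · exact C11 σ τ k (by omega)
  refine ⟨?_, ?_⟩
  · intro i hi1 hi2 σ τ
    rw [nuTrunc'_eq_form, nuTrunc'_eq_form, nuTrunc'_eq_form]
    refine (TruncAux.key i (fun j => Bnu' r χ₁ χ₂ a11 a12 a21 a22 a j (σ * τ))
      (fun j => Bnu' r χ₁ χ₂ a11 a12 a21 a22 a j σ)
      (fun j => Bnu' r χ₁ χ₂ a11 a12 a21 a22 a j τ)).mpr ?_
    intro k hk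
    exact Emat σ τ k (by omega)
  have Ccond : ∀ σ τ : G,
      ((χ₁ σ : A) * (χ₁ τ : A) * G21 r a21 a (r - 1) (σ * τ)
        = ∑ p ∈ Finset.range (r - 1 + 1),
            ((χ₁ σ : A) * G21 r a21 a p σ * ((χ₁ τ : A) * F1 a11 (r - 1 - p) τ)
              + (χ₂ σ : A) * F1 a22 p σ * ((χ₁ τ : A) * G21 r a21 a (r - 1 - p) τ)))
      ↔ (a (σ * τ)
          = a σ + (((χ₁ σ)⁻¹ : Aˣ) : A) * (χ₂ σ : A) * a τ
            + ∑ j ∈ Finset.Icc 1 (r - 1),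
                (a21 j σ * a11 (r - j) τ
                  + (((χ₁ σ)⁻¹ : Aˣ) : A) * (χ₂ σ : A) * a22 j σ * a21 (r - j) τ)) := by
    intro σ τ
    have hinv : (χ₁ σ : A) * (((χ₁ σ)⁻¹ : Aˣ) : A) = 1 := Units.mul_inv _
    have hG : G21 r a21 a (r - 1) (σ * τ) = a (σ * τ) := by
      unfold TruncAux.G21; rw [if_pos rfl]
    have hGσ : G21 r a21 a (r - 1) σ = a σ := by
      unfold TruncAux.G21; rw [if_pos rfl]
    have hGτ : G21 r a21 a (r - 1) τ = a τ := by
      unfold TruncAux.G21; rw [if_pos rfl]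
    have hLHS : ∑ p ∈ Finset.range (r - 1 + 1),
            ((χ₁ σ : A) * G21 r a21 a p σ * ((χ₁ τ : A) * F1 a11 (r - 1 - p) τ)
              + (χ₂ σ : A) * F1 a22 p σ * ((χ₁ τ : A) * G21 r a21 a (r - 1 - p) τ))
        = (χ₁ σ : A) * a σ * (χ₁ τ : A) + (χ₂ σ : A) * a τ * (χ₁ τ : A)
          + ∑ p ∈ Finset.range (r - 1),
              ((χ₁ σ : A) * a21 (p + 1) σ * ((χ₁ τ : A) * a11 (r - 1 - p) τ)
                + (χ₂ σ : A) * a22 (p + 1) σ * ((χ₁ τ : A) * a21 (r - 1 - p) τ)) := by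
      rw [Finset.sum_add_distrib, Finset.sum_range_succ, Finset.sum_range_succ']
      rw [hGσ, Nat.sub_self, Nat.sub_zero, hGτ,
        show F1 a11 0 τ = 1 from by simp [TruncAux.F1],
        show F1 a22 0 σ = 1 from by simp [TruncAux.F1]]
      have e1 : ∑ p ∈ Finset.range (r - 1),
            (χ₁ σ : A) * G21 r a21 a p σ * ((χ₁ τ : A) * F1 a11 (r - 1 - p) τ)
          = ∑ p ∈ Finset.range (r - 1),
            (χ₁ σ : A) * a21 (p + 1) σ * ((χ₁ τ : A) * a11 (r - 1 - p) τ) := by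
        refine Finset.sum_congr rfl fun p hp => ?_
        rw [Finset.mem_range] at hp
        rw [show G21 r a21 a p σ = a21 (p + 1) σ from by
            unfold TruncAux.G21; rw [if_neg (by omega)],
          show F1 a11 (r - 1 - p) τ = a11 (r - 1 - p) τ from by
            unfold TruncAux.F1; rw [if_neg (by omega)]]
      have e2 : ∑ p ∈ Finset.range (r - 1),
            (χ₂ σ : A) * F1 a22 (p + 1) σ * ((χ₁ τ : A) * G21 r a21 a (r - 1 - (p + 1)) τ)
          = ∑ p ∈ Finset.range (r - 1),
            (χ₂ σ : A) * a22 (p + 1) σ * ((χ₁ τ : A) * a21 (r - 1 - p) τ) := by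
        refine Finset.sum_congr rfl fun p hp => ?_
        rw [Finset.mem_range] at hp
        rw [show F1 a22 (p + 1) σ = a22 (p + 1) σ from by
            unfold TruncAux.F1; rw [if_neg (by omega)],
          show G21 r a21 a (r - 1 - (p + 1)) τ = a21 (r - 1 - (p + 1) + 1) τ from by
            unfold TruncAux.G21; rw [if_neg (by omega)],
          show r - 1 - (p + 1) + 1 = r - 1 - p from by omega]
      rw [e1, e2, Finset.sum_add_distrib]
      ring
    rw [hG, hLHS]
    have hRHS : (χ₁ σ : A) * (χ₁ τ : A) *
          (a σ + (((χ₁ σ)⁻¹ : Aˣ) : A) * (χ₂ σ : A) * a τ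
            + ∑ j ∈ Finset.Icc 1 (r - 1),
                (a21 j σ * a11 (r - j) τ
                  + (((χ₁ σ)⁻¹ : Aˣ) : A) * (χ₂ σ : A) * a22 j σ * a21 (r - j) τ))
        = (χ₁ σ : A) * a σ * (χ₁ τ : A) + (χ₂ σ : A) * a τ * (χ₁ τ : A)
          + ∑ p ∈ Finset.range (r - 1),
              ((χ₁ σ : A) * a21 (p + 1) σ * ((χ₁ τ : A) * a11 (r - 1 - p) τ)
                + (χ₂ σ : A) * a22 (p + 1) σ * ((χ₁ τ : A) * a21 (r - 1 - p) τ)) := by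
      rw [show Finset.Icc 1 (r - 1) = Finset.Ico 1 (r - 1 + 1) from by
        rw [Finset.Ico_add_one_right_eq_Icc], Finset.sum_Ico_eq_sum_range]
      simp only [Nat.add_sub_cancel]
      have e3 : ∑ p ∈ Finset.range (r - 1),
            (a21 (1 + p) σ * a11 (r - (1 + p)) τ
              + (((χ₁ σ)⁻¹ : Aˣ) : A) * (χ₂ σ : A) * a22 (1 + p) σ * a21 (r - (1 + p)) τ)
          = ∑ p ∈ Finset.range (r - 1),
            (a21 (p + 1) σ * a11 (r - 1 - p) τ
              + (((χ₁ σ)⁻¹ : Aˣ) : A) * (χ₂ σ : A) * a22 (p + 1) σ * a21 (r - 1 - p) τ) := by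
        refine Finset.sum_congr rfl fun p hp => ?_
        rw [show 1 + p = p + 1 from by omega, show r - (p + 1) = r - 1 - p from by omega]
      have e4 : ∑ p ∈ Finset.range (r - 1),
            (χ₁ σ : A) * (χ₁ τ : A) *
              (a21 (p + 1) σ * a11 (r - 1 - p) τ
                + (((χ₁ σ)⁻¹ : Aˣ) : A) * (χ₂ σ : A) * a22 (p + 1) σ * a21 (r - 1 - p) τ)
          = ∑ p ∈ Finset.range (r - 1),
              ((χ₁ σ : A) * a21 (p + 1) σ * ((χ₁ τ : A) * a11 (r - 1 - p) τ)
                + (χ₂ σ : A) * a22 (p + 1) σ * ((χ₁ τ : A) * a21 (r - 1 - p) τ)) := by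
        refine Finset.sum_congr rfl fun p hp => ?_
        linear_combination ((χ₁ τ : A) * (χ₂ σ : A) * a22 (p + 1) σ * a21 (r - 1 - p) τ) * hinv
      rw [e3, mul_add, mul_add, Finset.mul_sum, e4]
      linear_combination ((χ₁ τ : A) * (χ₂ σ : A) * a τ) * hinv
    rw [← hRHS]
    rw [show ((χ₁ σ : A) * (χ₁ τ : A)) = ((χ₁ σ * χ₁ τ : Aˣ) : A) from (Units.val_mul _ _).symm]
    exact Units.mul_right_inj _
  constructor
  · intro h σ τ
    have h2 := h σ τ
    rw [nuTrunc'_eq_form, nuTrunc'_eq_form, nuTrunc'_eq_form] at h2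
    have h3 := (TruncAux.key (r - 1) (fun j => Bnu' r χ₁ χ₂ a11 a12 a21 a22 a j (σ * τ))
      (fun j => Bnu' r χ₁ χ₂ a11 a12 a21 a22 a j σ)
      (fun j => Bnu' r χ₁ χ₂ a11 a12 a21 a22 a j τ)).mp h2 (r - 1) le_rfl
    have h4 := (TruncAux.ent_iff (Bnu' r χ₁ χ₂ a11 a12 a21 a22 a (r - 1) (σ * τ))
      (fun p => Bnu' r χ₁ χ₂ a11 a12 a21 a22 a p σ)
      (fun p => Bnu' r χ₁ χ₂ a11 a12 a21 a22 a p τ) (r - 1)).mp h3 1 0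
    simp only [Bnu'_entries χ₁ χ₂ a11 a12 a21 a22 a r hr h120, Matrix.cons_val',
      Matrix.cons_val_zero, Matrix.cons_val_one, Matrix.head_cons, Matrix.head_fin_const,
      Matrix.empty_val', Matrix.cons_val_fin_one, map_mul, Units.val_mul] at h4
    exact (Ccond σ τ).mp h4
  · intro hc σ τ
    rw [nuTrunc'_eq_form, nuTrunc'_eq_form, nuTrunc'_eq_form]
    refine (TruncAux.key (r - 1) (fun j => Bnu' r χ₁ χ₂ a11 a12 a21 a22 a j (σ * τ))
      (fun j => Bnu' r χ₁ χ₂ a11 a12 a21 a22 a j σ)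
      (fun j => Bnu' r χ₁ χ₂ a11 a12 a21 a22 a j τ)).mpr ?_
    intro k hk
    rcases lt_or_eq_of_le hk with hk' | hk'
    · exact Emat σ τ k (by omega)
    · subst hk'
      refine (TruncAux.ent_iff (Bnu' r χ₁ χ₂ a11 a12 a21 a22 a (r - 1) (σ * τ))
        (fun p => Bnu' r χ₁ χ₂ a11 a12 a21 a22 a p σ)
        (fun p => Bnu' r χ₁ χ₂ a11 a12 a21 a22 a p τ) (r - 1)).mpr ?_
      intro i j
      fin_cases i <;> fin_cases j <;>
        simp only [Bnu'_entries χ₁ χ₂ a11 a12 a21 a22 a r hr h120, Matrix.cons_val',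
          Matrix.cons_val_zero, Matrix.cons_val_one, Matrix.head_cons, Matrix.head_fin_const,
          Matrix.empty_val', Matrix.cons_val_fin_one, map_mul, Units.val_mul]
      · exact C00 σ τ (r - 1) le_rfl
      · exact C01 σ τ (r - 1) le_rfl
      · exact (Ccond σ τ).mpr (hc σ τ)
      · exact C11 σ τ (r - 1) le_rfl
end

section
/- Given a defining system {a(i,j)}, define c : G × G → A by c(σ,τ) = Σ_{k=1}^{n−1} a(1,k)(σ)·a(k+1,n)(τ). Then: (a) c satisfies the 2-cocycle identity c(τ,υ) − c(στ,υ) + c(σ,τυ) − c(σ,τ) = 0 for all σ, τ, υ ∈ G; (b) the unipotent upper-triangular maps ν₁, ν₂ : G → GL_n(A), defined by (ν₁(σ))_{k,k} = 1, (ν₁(σ))_{k,l} = a(k, l−1)(σ) for 1 ≤ k < l ≤ n, (ν₁(σ))_{k,l} = 0 for k > l, and (ν₂(σ))_{k,k} = 1, (ν₂(σ))_{k,l} = a(k+1, l)(σ) for 1 ≤ k < l ≤ n, (ν₂(σ))_{k,l} = 0 for k > l, are group homomorphisms; (c) for a function a : G → A, the unipotent map ν : G → GL_{n+1}(A) with entries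 ν(σ)_{k,k} = 1, ν(σ)_{k,l} = a(k, l−1)(σ) for 1 ≤ k < l ≤ n+1 with (k,l) ≠ (1, n+1), ν(σ)_{1,n+1} = a(σ), and ν(σ)_{k,l} = 0 for k > l, is a group homomorphism if and only if a(στ) = a(σ) + a(τ) + c(σ,τ) for all σ, τ ∈ G; in particular such a ν exists for some a if and only if the 2-cocycle c is a coboundary. -/
section

variable {G : Type*} [Group G] {A : Type*} [CommRing A]

/-- A defining system for the `n`-fold Massey product: functions
`a(i,j) : G → A` for `1 ≤ i ≤ j ≤ n`, `(i,j) ≠ (1,n)`, satisfying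
`a(i,j)(στ) = a(i,j)(σ) + a(i,j)(τ) + Σ_{k=i}^{j−1} a(i,k)(σ)·a(k+1,j)(τ)`. -/
def IsDefiningSystem (n : ℕ) (a : ℕ → ℕ → G → A) : Prop :=
  ∀ i j : ℕ, 1 ≤ i → i ≤ j → j ≤ n → (i, j) ≠ (1, n) → ∀ σ τ : G,
    a i j (σ * τ) = a i j σ + a i j τ + ∑ k ∈ Finset.Ico i j, a i k σ * a (k + 1) j τ

/-- The `2`-cochain `c(σ,τ) = Σ_{k=1}^{n−1} a(1,k)(σ)·a(k+1,n)(τ)`. -/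
def masseyCocycle (n : ℕ) (a : ℕ → ℕ → G → A) (σ τ : G) : A :=
  ∑ k ∈ Finset.Ico 1 n, a 1 k σ * a (k + 1) n τ

/-- The unipotent upper-triangular matrix `ν₁(σ)`, with `1`s on the diagonal and
`(k,l)`-entry `a(k, l−1)(σ)` for `1 ≤ k < l ≤ n` (here written with `0`-indexed
`Fin n` coordinates). -/
def nuOne (n : ℕ) (a : ℕ → ℕ → G → A) (σ : G) : Matrix (Fin n) (Fin n) A :=
  Matrix.of fun k l : Fin n =>
    if (k : ℕ) = (l : ℕ) then 1
    else if (k : ℕ) < (l : ℕ) then a ((k : ℕ) + 1) (l : ℕ) σ else 0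

/-- The unipotent upper-triangular matrix `ν₂(σ)`, with `1`s on the diagonal and
`(k,l)`-entry `a(k+1, l)(σ)` for `1 ≤ k < l ≤ n`. -/
def nuTwo (n : ℕ) (a : ℕ → ℕ → G → A) (σ : G) : Matrix (Fin n) (Fin n) A :=
  Matrix.of fun k l : Fin n =>
    if (k : ℕ) = (l : ℕ) then 1
    else if (k : ℕ) < (l : ℕ) then a ((k : ℕ) + 2) ((l : ℕ) + 1) σ else 0

/-- The unipotent upper-triangular `(n+1)×(n+1)` matrix `ν(σ)`, with `1`s on the
diagonal, `(k,l)`-entry `a(k, l−1)(σ)` for `1 ≤ k < l ≤ n+1` with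
`(k,l) ≠ (1,n+1)`, and `(1,n+1)`-entry `aa(σ)`. -/
def nuBig (n : ℕ) (a : ℕ → ℕ → G → A) (aa : G → A) (σ : G) :
    Matrix (Fin (n + 1)) (Fin (n + 1)) A :=
  Matrix.of fun k l : Fin (n + 1) =>
    if (k : ℕ) = (l : ℕ) then 1
    else if (k : ℕ) < (l : ℕ) then
      (if (k : ℕ) = 0 ∧ (l : ℕ) = n then aa σ else a ((k : ℕ) + 1) (l : ℕ) σ)
    else 0

end


section
variable {A : Type*} [CommRing A]

/-- Generic unipotent upper-triangular matrix with strictly-upper entries `f`. -/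
def tri (n : ℕ) (f : ℕ → ℕ → A) : Matrix (Fin n) (Fin n) A :=
  Matrix.of fun k l : Fin n =>
    if (k : ℕ) = (l : ℕ) then 1
    else if (k : ℕ) < (l : ℕ) then f (k : ℕ) (l : ℕ) else 0

lemma tri_mul (n : ℕ) (f g : ℕ → ℕ → A) :
    tri n f * tri n g =
      tri n (fun k l => f k l + g k l + ∑ m ∈ Finset.Ico (k + 1) l, f k m * g m l) := by
  ext k l
  rw [Matrix.mul_apply]
  simp only [tri, Matrix.of_apply]
  rcases lt_trichotomy (k : ℕ) (l : ℕ) with hkl | hkl | hkl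
  · rw [if_neg (by omega), if_pos hkl]
    have hsub : Finset.Ico (k : ℕ) ((l : ℕ) + 1) ⊆ Finset.range n := by
      intro m hm
      simp only [Finset.mem_Ico, Finset.mem_range] at *
      omega
    rw [Fin.sum_univ_eq_sum_range
      (fun m => (if (k : ℕ) = m then (1 : A) else if (k : ℕ) < m then f k m else 0) *
        (if m = (l : ℕ) then 1 else if m < (l : ℕ) then g m l else 0))]
    rw [← Finset.sum_subset hsub (by
      intro m _ hm
      simp only [Finset.mem_Ico] at hm
      have : ¬((k : ℕ) ≤ m ∧ m < (l : ℕ) + 1) := by tauto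
      split_ifs <;> (first | ring1 | (exfalso; omega)))]
    rw [Finset.sum_Ico_succ_top (by omega), Finset.sum_eq_sum_Ico_succ_bot (by omega)]
    rw [if_pos rfl, if_neg (by omega), if_pos hkl, if_pos rfl, if_neg (by omega), if_pos hkl]
    have hmid : ∑ m ∈ Finset.Ico ((k : ℕ) + 1) (l : ℕ),
        (if (k : ℕ) = m then (1 : A) else if (k : ℕ) < m then f k m else 0) *
          (if m = (l : ℕ) then 1 else if m < (l : ℕ) then g m l else 0) =
        ∑ m ∈ Finset.Ico ((k : ℕ) + 1) (l : ℕ), f k m * g m l := by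
      apply Finset.sum_congr rfl
      intro m hm
      simp only [Finset.mem_Ico] at hm
      rw [if_neg (by omega), if_pos (by omega), if_neg (by omega), if_pos (by omega)]
    rw [hmid]; ring
  · rw [if_pos hkl]
    have hkl' : k = l := Fin.ext hkl
    subst hkl'
    rw [Finset.sum_eq_single k]
    · simp
    · intro m _ hm
      have hmk : (m : ℕ) ≠ (k : ℕ) := fun h => hm (Fin.ext h)
      split_ifs <;> (first | ring1 | (exfalso; omega))
    · intro h; exact absurd (Finset.mem_univ k) h
  · rw [if_neg (by omega), if_neg (by omega)]
    apply Finset.sum_eq_zero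
    intro m _
    rcases lt_trichotomy (k : ℕ) (m : ℕ) with h | h | h <;>
      split_ifs <;> (first | ring1 | (exfalso; omega))

lemma tri_congr (n : ℕ) (f g : ℕ → ℕ → A)
    (h : ∀ k l : ℕ, k < l → l < n → f k l = g k l) : tri n f = tri n g := by
  ext k l
  simp only [tri, Matrix.of_apply]
  split_ifs with h1 h2
  · rfl
  · exact h k l h2 l.isLt
  · rfl

end
/-- Given a defining system `{a(i,j)}` and
`c(σ,τ) = Σ_{k=1}^{n−1} a(1,k)(σ)·a(k+1,n)(τ)`: (a) `c` satisfies the 2-cocycle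
identity; (b) the unipotent upper-triangular maps `ν₁, ν₂` are group
homomorphisms; (c) for `aa : G → A`, the unipotent map `ν` with top-right corner
`aa` is a group homomorphism iff `aa(στ) = aa(σ) + aa(τ) + c(σ,τ)`; in
particular such a `ν` exists for some `aa` iff the 2-cocycle `c` is a
coboundary. -/
theorem masseyCocycle_properties
    (G : Type*) [Group G] (A : Type*) [CommRing A] (n : ℕ) (hn : 2 ≤ n)
    (a : ℕ → ℕ → G → A) (hdef : IsDefiningSystem n a) :
    (∀ σ τ υ : G,
      masseyCocycle n a τ υ - masseyCocycle n a (σ * τ) υ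
        + masseyCocycle n a σ (τ * υ) - masseyCocycle n a σ τ = 0)
    ∧ (∀ σ τ : G, nuOne n a (σ * τ) = nuOne n a σ * nuOne n a τ)
    ∧ (∀ σ τ : G, nuTwo n a (σ * τ) = nuTwo n a σ * nuTwo n a τ)
    ∧ (∀ aa : G → A,
        (∀ σ τ : G, nuBig n a aa (σ * τ) = nuBig n a aa σ * nuBig n a aa τ)
          ↔ (∀ σ τ : G, aa (σ * τ) = aa σ + aa τ + masseyCocycle n a σ τ))
    ∧ ((∃ aa : G → A,
          ∀ σ τ : G, nuBig n a aa (σ * τ) = nuBig n a aa σ * nuBig n a aa τ)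
        ↔ (∃ h : G → A,
            ∀ σ τ : G, masseyCocycle n a σ τ = h σ + h τ - h (σ * τ))) := by
  have hb1 : ∀ σ τ : G, nuOne n a (σ * τ) = nuOne n a σ * nuOne n a τ := by
    intro σ τ
    show tri n (fun k l => a (k + 1) l (σ * τ))
        = tri n (fun k l => a (k + 1) l σ) * tri n (fun k l => a (k + 1) l τ)
    rw [tri_mul]
    apply tri_congr
    intro k l hkl hln
    exact hdef (k + 1) l (by omega) (by omega) (by omega)
      (by intro h; rw [Prod.mk.injEq] at h; omega) σ τ
  have hb2 : ∀ σ τ : G, nuTwo n a (σ * τ) = nuTwo n a σ * nuTwo n a τ := by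
    intro σ τ
    show tri n (fun k l => a (k + 2) (l + 1) (σ * τ))
        = tri n (fun k l => a (k + 2) (l + 1) σ) * tri n (fun k l => a (k + 2) (l + 1) τ)
    rw [tri_mul]
    apply tri_congr
    intro k l hkl hln
    rw [hdef (k + 2) (l + 1) (by omega) (by omega) (by omega)
      (by intro h; rw [Prod.mk.injEq] at h; omega) σ τ]
    congr 1
    rw [Finset.sum_Ico_eq_sum_range, Finset.sum_Ico_eq_sum_range]
    rw [show l + 1 - (k + 2) = l - (k + 1) from by omega]
    apply Finset.sum_congr rfl
    intro m _
    rw [show k + 2 + m = k + 1 + m + 1 from by omega,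
        show k + 1 + m + 1 + 1 = k + 1 + m + 2 from by omega]
  have hsum : ∀ (aa : G → A) (σ τ : G) (k l : ℕ), l ≤ n →
      ∑ m ∈ Finset.Ico (k + 1) l,
          (if k = 0 ∧ m = n then aa σ else a (k + 1) m σ) *
            (if m = 0 ∧ l = n then aa τ else a (m + 1) l τ)
        = ∑ m ∈ Finset.Ico (k + 1) l, a (k + 1) m σ * a (m + 1) l τ := by
    intro aa σ τ k l hl
    apply Finset.sum_congr rfl
    intro m hm
    rw [Finset.mem_Ico] at hm
    rw [if_neg (by rintro ⟨h1, h2⟩; omega), if_neg (by rintro ⟨h1, h2⟩; omega)]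
  have e0 : ∀ (aa : G → A) (g : G), nuBig n a aa g
      = tri (n + 1) (fun k l => if k = 0 ∧ l = n then aa g else a (k + 1) l g) :=
    fun aa g => rfl
  have hd : ∀ aa : G → A,
      (∀ σ τ : G, nuBig n a aa (σ * τ) = nuBig n a aa σ * nuBig n a aa τ)
        ↔ (∀ σ τ : G, aa (σ * τ) = aa σ + aa τ + masseyCocycle n a σ τ) := by
    intro aa
    constructor
    · intro hν σ τ
      have h1 := hν σ τ
      rw [e0, e0, e0, tri_mul] at h1
      have h2 := Matrix.ext_iff.mpr h1 ⟨0, by omega⟩ ⟨n, by omega⟩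
      simp only [tri, Matrix.of_apply] at h2
      rw [if_neg (show ¬((0 : ℕ) = n) by omega), if_pos (show (0 : ℕ) < n by omega),
        if_neg (show ¬((0 : ℕ) = n) by omega), if_pos (show (0 : ℕ) < n by omega)] at h2
      have h3 : ∀ x ∈ Finset.Ico (0 + 1) n,
          (if True ∧ x = n then aa σ else a (0 + 1) x σ) *
            (if x = 0 ∧ True then aa τ else a (x + 1) n τ) = a 1 x σ * a (x + 1) n τ := by
        intro x hx
        rw [Finset.mem_Ico] at hx
        rw [if_neg (by rintro ⟨-, h⟩; omega), if_neg (by rintro ⟨h, -⟩; omega)]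
      rw [Finset.sum_congr rfl h3] at h2
      exact h2
    · intro haa σ τ
      rw [e0, e0, e0, tri_mul]
      apply tri_congr
      intro k l hkl hl1
      rw [hsum aa σ τ k l (by omega)]
      by_cases hc : k = 0 ∧ l = n
      · obtain ⟨rfl, rfl⟩ := hc
        rw [if_pos ⟨rfl, rfl⟩, if_pos ⟨rfl, rfl⟩, if_pos ⟨rfl, rfl⟩]
        exact haa σ τ
      · rw [if_neg hc, if_neg hc, if_neg hc]
        exact hdef (k + 1) l (by omega) (by omega) (by omega)
          (by intro h; rw [Prod.mk.injEq] at h; exact hc ⟨by omega, h.2⟩) σ τ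
  have hca : ∀ σ τ υ : G, masseyCocycle n a τ υ - masseyCocycle n a (σ * τ) υ
      + masseyCocycle n a σ (τ * υ) - masseyCocycle n a σ τ = 0 := by
    intro σ τ υ
    have e1 : masseyCocycle n a (σ * τ) υ
        = masseyCocycle n a σ υ + masseyCocycle n a τ υ
          + ∑ k ∈ Finset.Ico 1 n, ∑ m ∈ Finset.Ico 1 k,
              a 1 m σ * a (m + 1) k τ * a (k + 1) n υ := by
      unfold masseyCocycle
      rw [← Finset.sum_add_distrib, ← Finset.sum_add_distrib]
      apply Finset.sum_congr rfl
      intro k hk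
      rw [Finset.mem_Ico] at hk
      rw [hdef 1 k le_rfl hk.1 (by omega)
        (by intro h; rw [Prod.mk.injEq] at h; omega) σ τ]
      rw [add_mul, add_mul, Finset.sum_mul]
    have e2 : masseyCocycle n a σ (τ * υ)
        = masseyCocycle n a σ τ + masseyCocycle n a σ υ
          + ∑ k ∈ Finset.Ico 1 n, ∑ m ∈ Finset.Ico (k + 1) n,
              a 1 k σ * (a (k + 1) m τ * a (m + 1) n υ) := by
      unfold masseyCocycle
      rw [← Finset.sum_add_distrib, ← Finset.sum_add_distrib]
      apply Finset.sum_congr rfl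
      intro k hk
      rw [Finset.mem_Ico] at hk
      rw [hdef (k + 1) n (by omega) (by omega) le_rfl
        (by intro h; rw [Prod.mk.injEq] at h; omega) τ υ]
      rw [mul_add, mul_add, Finset.mul_sum]
    have e3 : ∑ k ∈ Finset.Ico 1 n, ∑ m ∈ Finset.Ico (k + 1) n,
          a 1 k σ * (a (k + 1) m τ * a (m + 1) n υ)
        = ∑ k ∈ Finset.Ico 1 n, ∑ m ∈ Finset.Ico 1 k,
            a 1 m σ * a (m + 1) k τ * a (k + 1) n υ := by
      rw [Finset.sum_Ico_Ico_comm' 1 n]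
      apply Finset.sum_congr rfl; intro k _
      apply Finset.sum_congr rfl; intro m _
      ring
    rw [e1, e2, e3]; ring
  refine ⟨hca, hb1, hb2, hd, ?_⟩
  constructor
  · rintro ⟨aa, hν⟩
    refine ⟨fun g => -aa g, fun σ τ => ?_⟩
    have := (hd aa).mp hν σ τ
    linear_combination -this
  · rintro ⟨h, hh⟩
    refine ⟨fun g => -h g, (hd _).mpr fun σ τ => ?_⟩
    linear_combination -(hh σ τ)
end
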